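/- arXiv:1407.5866 — 3 statements merged into one kernel-verified Lean document; each statement's English description precedes it below -/
import Mathlib

section
/- Let α ∈ (0,1) and assume the large deviation condition (LD) holds. Then Condition (*) holds automatically: for every δ > 0, lim_{u↓0} limsup_{n→∞} P( max_{1≤j≤k_n} | Σ_{k=1}^{j} ( (S^k_{r_n}/a_n)·1{|S^k_{r_n}|/a_n ≤ u} − E[(S^k_{r_n}/a_n)·1{|S^k_{r_n}|/a_n ≤ u}] ) | > δ ) = 0. -/
open MeasureTheory Filter Set
noncomputable section

def SlowlyVaryingAt (L : ℝ → ℝ) : Prop :=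
  ∀ c : ℝ, 0 < c → Tendsto (fun x => L (c * x) / L x) atTop (nhds 1)

def RegVarOf {Ω : Type*} [MeasurableSpace Ω] (P : Measure Ω) (Y : Ω → ℝ) (α : ℝ) : Prop :=
  ∃ L : ℝ → ℝ, Measurable L ∧ (∀ x : ℝ, 0 < x → 0 < L x) ∧ SlowlyVaryingAt L ∧
    ∀ x : ℝ, 0 < x → (P {ω | x < |Y ω|}).toReal = x ^ (-α) * L x

def IsStationarySeq {Ω : Type*} [MeasurableSpace Ω] (P : Measure Ω) (X : ℕ → Ω → ℝ) : Prop :=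
  ∀ m : ℕ, Measure.map (fun ω => fun i : ℕ => X (i + m) ω) P
    = Measure.map (fun ω => fun i : ℕ => X i ω) P

def pS {Ω : Type*} (X : ℕ → Ω → ℝ) (m : ℕ) (ω : Ω) : ℝ := ∑ i ∈ Finset.range m, X i ω

def blockS {Ω : Type*} (X : ℕ → Ω → ℝ) (r k : ℕ) (ω : Ω) : ℝ :=
  ∑ i ∈ Finset.range r, X ((k - 1) * r + i) ω

def truncBlock {Ω : Type*} (X : ℕ → Ω → ℝ) (a : ℝ) (r : ℕ) (u : ℝ) (k : ℕ) (ω : Ω) : ℝ :=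
  if |blockS X r k ω| / a ≤ u then blockS X r k ω / a else 0

def nuDens (α cp cm : ℝ) (x : ℝ) : ℝ :=
  if 0 < x then cp * α * x ^ (-α - 1)
  else if x < 0 then cm * α * (-x) ^ (-α - 1) else 0

def nuMeasure (α cp cm : ℝ) : Measure ℝ :=
  MeasureTheory.volume.withDensity (fun x => ENNReal.ofReal (nuDens α cp cm x))

def pastSigma {Ω : Type*} (X : ℕ → Ω → ℝ) (j : ℕ) : MeasurableSpace Ω :=
  ⨆ i ∈ Set.Iic j, MeasurableSpace.comap (X i) inferInstance

def futureSigma {Ω : Type*} (X : ℕ → Ω → ℝ) (j : ℕ) : MeasurableSpace Ω :=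
  ⨆ i ∈ Set.Ici j, MeasurableSpace.comap (X i) inferInstance

def alphaDep {Ω : Type*} [MeasurableSpace Ω] (P : Measure Ω) (mA mB : MeasurableSpace Ω) : ℝ :=
  sSup {d : ℝ | ∃ A B : Set Ω, MeasurableSet[mA] A ∧ MeasurableSet[mB] B ∧
    d = |(P (A ∩ B)).toReal - (P A).toReal * (P B).toReal|}

def alphaMix {Ω : Type*} [MeasurableSpace Ω] (P : Measure Ω) (X : ℕ → Ω → ℝ) (m : ℕ) : ℝ :=
  ⨆ j : ℕ, alphaDep P (pastSigma X j) (futureSigma X (j + m))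

def rhoDep {Ω : Type*} [MeasurableSpace Ω] (P : Measure Ω) (mA mB : MeasurableSpace Ω) : ℝ :=
  sSup {d : ℝ | ∃ f g : Ω → ℝ, Measurable[mA] f ∧ Measurable[mB] g ∧
    MemLp f 2 P ∧ MemLp g 2 P ∧
    d = |(∫ ω, f ω * g ω ∂P) - (∫ ω, f ω ∂P) * (∫ ω, g ω ∂P)| /
      Real.sqrt ((∫ ω, (f ω) ^ 2 ∂P) * (∫ ω, (g ω) ^ 2 ∂P))}

def rhoMix {Ω : Type*} [MeasurableSpace Ω] (P : Measure Ω) (X : ℕ → Ω → ℝ) (m : ℕ) : ℝ :=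
  ⨆ j : ℕ, rhoDep P (pastSigma X j) (futureSigma X (j + m))

def CKplus (f : ℝ → ℝ) : Prop :=
  Continuous f ∧ (∀ x, 0 ≤ f x) ∧ (∃ M : ℝ, ∀ x, f x ≤ M) ∧
  (∃ r : ℝ, 0 < r ∧ ∀ x : ℝ, |x| ≤ r → f x = 0) ∧
  (∃ lp : ℝ, Tendsto f atTop (nhds lp)) ∧ (∃ lm : ℝ, Tendsto f atBot (nhds lm))

/-- Condition (*) (Condition 3.1 in the paper): for every δ > 0, the limsup (in n) of
the probability that the maximal partial sum of centered truncated blocks exceeds δ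
tends to 0 as the truncation level u ↓ 0. -/
def CondStar {Ω : Type*} [MeasurableSpace Ω] (P : Measure Ω)
    (X : ℕ → Ω → ℝ) (a : ℕ → ℝ) (r : ℕ → ℕ) : Prop :=
  ∀ δ : ℝ, 0 < δ →
    Tendsto (fun u : ℝ =>
        Filter.limsup (fun n : ℕ =>
          P {ω | ∃ j ∈ Finset.Icc 1 (n / r n), δ <
            |∑ k ∈ Finset.Icc 1 j, (truncBlock X (a n) (r n) u k ω
              - ∫ ω', truncBlock X (a n) (r n) u k ω' ∂P)|}) atTop)
      (nhdsWithin 0 (Set.Ioi 0)) (nhds 0)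

section StmtAux

open Filter

lemma stmt4aux_geom (q : ℝ) (h0 : 0 ≤ q) (h1 : q < 1) (m : ℕ) :
    ∑ i ∈ Finset.range m, q ^ i ≤ 1 / (1 - q) := by
  have hd : 0 < 1 - q := by linarith
  have key : ∑ i ∈ Finset.range m, q ^ i = (1 - q ^ m) / (1 - q) := by
    rw [geom_sum_eq (ne_of_lt h1), ← neg_div_neg_eq]; ring_nf
  rw [key]
  have : 0 ≤ q ^ m := pow_nonneg h0 m
  gcongr
  linarith

lemma stmt4aux_min_add (x y v : ℝ) (hx : 0 ≤ x) (hy : 0 ≤ y) (hv : 0 ≤ v) :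
    min (x + y) v ≤ min x v + min y v := by
  rcases le_total x v with h | h
  · rcases le_total y v with h' | h'
    · rw [min_eq_left h, min_eq_left h']; exact min_le_left _ _
    · rw [min_eq_left h, min_eq_right h']
      exact le_add_of_nonneg_of_le hx (min_le_right _ _)
  · rw [min_eq_right h]
    nlinarith [le_min hy hv, min_le_right (x+y) v, le_min hx hv]

lemma stmt4aux_min_sum {ι : Type*} (s : Finset ι) (g : ι → ℝ) (hg : ∀ i ∈ s, 0 ≤ g i)
    (v : ℝ) (hv : 0 ≤ v) : min (∑ i ∈ s, g i) v ≤ ∑ i ∈ s, min (g i) v := by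
  classical
  induction s using Finset.induction_on with
  | empty => simp [min_eq_left hv]
  | insert a s' hnot ih =>
    rw [Finset.sum_insert hnot, Finset.sum_insert hnot]
    have h1 : 0 ≤ g a := hg a (Finset.mem_insert_self _ _)
    have h2 : ∀ i ∈ s', 0 ≤ g i := fun i hi => hg i (Finset.mem_insert_of_mem hi)
    have h3 : 0 ≤ ∑ i ∈ s', g i := Finset.sum_nonneg h2
    calc min (g a + ∑ i ∈ s', g i) v ≤ min (g a) v + min (∑ i ∈ s', g i) v :=
          stmt4aux_min_add _ _ _ h1 h3 hv
      _ ≤ min (g a) v + ∑ i ∈ s', min (g i) v := by linarith [ih h2]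

lemma stmt4aux_min_abs_sum {ι : Type*} (s : Finset ι) (f : ι → ℝ) (v : ℝ) (hv : 0 ≤ v) :
    min |∑ i ∈ s, f i| v ≤ ∑ i ∈ s, min |f i| v := by
  calc min |∑ i ∈ s, f i| v ≤ min (∑ i ∈ s, |f i|) v :=
        min_le_min (Finset.abs_sum_le_sum_abs _ _) le_rfl
    _ ≤ ∑ i ∈ s, min |f i| v :=
        stmt4aux_min_sum s _ (fun i _ => abs_nonneg _) v hv

lemma stmt4aux_ptwise (v y : ℝ) (hv : 0 ≤ v) (m : ℕ) :
    min y v ≤ v / 2 ^ m + ∑ i ∈ Finset.range m, (if v / 2 ^ (i + 1) < y then v / 2 ^ i else 0) := by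
  induction m with
  | zero => simpa using min_le_right y v
  | succ m ih =>
    rw [Finset.sum_range_succ]
    by_cases h : v / 2 ^ (m + 1) < y
    · rw [if_pos h]
      have h1 : (0:ℝ) ≤ v / 2 ^ (m+1) := by positivity
      linarith [ih]
    · rw [if_neg h]
      push_neg at h
      have h1 : min y v ≤ y := min_le_left _ _
      have h2 : (0:ℝ) ≤ ∑ i ∈ Finset.range m, (if v / 2 ^ (i + 1) < y then v / 2 ^ i else 0) := by
        apply Finset.sum_nonneg; intro i _; split <;> positivity
      linarith

lemma stmt4aux_ratio {L T : ℝ → ℝ} {α : ℝ} (hSV : SlowlyVaryingAt L)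
    (hLpos : ∀ x, 0 < x → 0 < L x)
    (hTL : ∀ x, 0 < x → T x = x ^ (-α) * L x) {c : ℝ} (hc : 0 < c) :
    Tendsto (fun x => T (c * x) / T x) atTop (nhds (c ^ (-α))) := by
  have h1 : Tendsto (fun x => c ^ (-α) * (L (c * x) / L x)) atTop (nhds (c ^ (-α))) := by
    simpa using (hSV c hc).const_mul (c ^ (-α))
  refine h1.congr' ?_
  filter_upwards [eventually_gt_atTop (0:ℝ)] with x hx
  have hcx : 0 < c * x := mul_pos hc hx
  rw [hTL x hx, hTL _ hcx, Real.mul_rpow hc.le hx.le]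
  have hLx := (hLpos x hx).ne'
  have hxp : (0:ℝ) < x ^ (-α) := Real.rpow_pos_of_pos hx _
  field_simp

lemma stmt4aux_halving {L T : ℝ → ℝ} {α : ℝ} (hα1 : α < 1)
    (hSV : SlowlyVaryingAt L) (hLpos : ∀ x, 0 < x → 0 < L x)
    (hTL : ∀ x, 0 < x → T x = x ^ (-α) * L x) :
    ∃ x₁ : ℝ, 1 ≤ x₁ ∧
      (∀ x ≥ x₁, (2:ℝ) ^ (-((1+α)/2)) * T x ≤ T (2 * x)) ∧
      (∀ x ≥ x₁, T x ≤ (2:ℝ) ^ ((1+α)/2) * T (2 * x)) := by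
  have hTpos : ∀ x, 0 < x → 0 < T x := by
    intro x hx
    rw [hTL x hx]
    exact mul_pos (Real.rpow_pos_of_pos hx _) (hLpos x hx)
  have hr2 : Tendsto (fun x => T (2 * x) / T x) atTop (nhds ((2:ℝ) ^ (-α))) :=
    stmt4aux_ratio hSV hLpos hTL two_pos
  have hθlt : (2:ℝ) ^ (-((1+α)/2)) < (2:ℝ) ^ (-α) := by
    rw [Real.rpow_lt_rpow_left_iff one_lt_two]
    linarith
  have hρgt : (2:ℝ) ^ α < (2:ℝ) ^ ((1+α)/2) := by
    rw [Real.rpow_lt_rpow_left_iff one_lt_two]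
    linarith
  have hinv : Tendsto (fun x => T x / T (2 * x)) atTop (nhds ((2:ℝ) ^ α)) := by
    have h2 : ((2:ℝ) ^ (-α)) ≠ 0 := (Real.rpow_pos_of_pos two_pos _).ne'
    have h3 := hr2.inv₀ h2
    have heq : ((2:ℝ) ^ (-α))⁻¹ = (2:ℝ) ^ α := by
      rw [← Real.rpow_neg (by norm_num : (0:ℝ) ≤ 2)]; norm_num
    rw [heq] at h3
    refine h3.congr ?_
    intro x
    rw [inv_div]
  have ev1 := hr2.eventually_const_lt hθlt
  have ev2 := hinv.eventually_lt_const hρgt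
  rw [eventually_atTop] at ev1 ev2
  obtain ⟨b1, hb1⟩ := ev1
  obtain ⟨b2, hb2⟩ := ev2
  refine ⟨max 1 (max b1 b2), le_max_left _ _, ?_, ?_⟩
  · intro x hx
    have hx0 : (0:ℝ) < x := lt_of_lt_of_le one_pos (le_trans (le_max_left _ _) hx)
    have h := hb1 x (le_trans (le_trans (le_max_left _ _) (le_max_right _ _)) hx)
    rw [lt_div_iff₀ (hTpos x hx0)] at h
    linarith
  · intro x hx
    have hx0 : (0:ℝ) < x := lt_of_lt_of_le one_pos (le_trans (le_max_left _ _) hx)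
    have h := hb2 x (le_trans (le_trans (le_max_right _ _) (le_max_right _ _)) hx)
    have h2x : 0 < T (2 * x) := hTpos _ (by linarith)
    rw [div_lt_iff₀ h2x] at h
    linarith [mul_comm (T (2*x)) ((2:ℝ) ^ ((1+α)/2))]

lemma stmt4aux_chain_up {T : ℝ → ℝ} {θ x₀ : ℝ} (hx₀ : 1 ≤ x₀) (hθ : 0 < θ)
    (h : ∀ x ≥ x₀, θ * T x ≤ T (2 * x)) :
    ∀ j : ℕ, θ ^ j * T x₀ ≤ T (2 ^ j * x₀) := by
  intro j
  induction j with
  | zero => simp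
  | succ j ih =>
    have hx0 : (0:ℝ) < x₀ := lt_of_lt_of_le one_pos hx₀
    have h1 : x₀ ≤ 2 ^ j * x₀ := le_mul_of_one_le_left hx0.le (one_le_pow₀ one_le_two)
    have h2 := h (2 ^ j * x₀) h1
    have h3 : θ * (θ ^ j * T x₀) ≤ θ * T (2 ^ j * x₀) :=
      mul_le_mul_of_nonneg_left ih hθ.le
    calc θ ^ (j+1) * T x₀ = θ * (θ ^ j * T x₀) := by ring
      _ ≤ θ * T (2 ^ j * x₀) := h3
      _ ≤ T (2 * (2 ^ j * x₀)) := h2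
      _ = T (2 ^ (j+1) * x₀) := by ring_nf

lemma stmt4aux_xT {T : ℝ → ℝ} {θ x₀ : ℝ} (hx₀ : 1 ≤ x₀) (hθ : 1 < 2 * θ) (hθ0 : 0 < θ)
    (hTanti : Antitone T) (hT0 : ∀ x, 0 ≤ T x) (hTx₀ : 0 < T x₀)
    (h : ∀ x ≥ x₀, θ * T x ≤ T (2 * x)) :
    Tendsto (fun x => x * T x) atTop atTop := by
  have hx0 : (0:ℝ) < x₀ := lt_of_lt_of_le one_pos hx₀
  set C : ℝ := θ * (x₀ * T x₀) with hC
  have hCpos : 0 < C := mul_pos hθ0 (mul_pos hx0 hTx₀)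
  have hlow : Tendsto (fun x : ℝ => C * (2 * θ) ^ ⌊Real.logb 2 (x / x₀)⌋₊) atTop atTop := by
    have h1 : Tendsto (fun x : ℝ => x / x₀) atTop atTop := tendsto_id.atTop_div_const hx0
    have h2 : Tendsto (fun x : ℝ => Real.logb 2 (x / x₀)) atTop atTop :=
      (Real.tendsto_logb_atTop one_lt_two).comp h1
    have h3 : Tendsto (fun x : ℝ => ⌊Real.logb 2 (x / x₀)⌋₊) atTop atTop :=
      tendsto_nat_floor_atTop.comp h2
    exact ((tendsto_pow_atTop_atTop_of_one_lt hθ).comp h3).const_mul_atTop hCpos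
  apply tendsto_atTop_mono' atTop ?_ hlow
  filter_upwards [eventually_ge_atTop x₀] with x hx
  have hxpos : (0:ℝ) < x := lt_of_lt_of_le hx0 hx
  set j : ℕ := ⌊Real.logb 2 (x / x₀)⌋₊ with hj
  have hxx : (1:ℝ) ≤ x / x₀ := (one_le_div hx0).2 hx
  have hlogb0 : 0 ≤ Real.logb 2 (x / x₀) := Real.logb_nonneg one_lt_two hxx
  have hxr : (2:ℝ) ^ (Real.logb 2 (x / x₀)) = x / x₀ :=
    Real.rpow_logb two_pos (by norm_num) (by linarith)
  have hp1 : (2:ℝ) ^ j ≤ x / x₀ := by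
    rw [← hxr, ← Real.rpow_natCast 2 j]
    exact Real.rpow_le_rpow_of_exponent_le one_le_two (Nat.floor_le hlogb0)
  have hp2 : x / x₀ < 2 ^ (j + 1) := by
    rw [← hxr, ← Real.rpow_natCast 2 (j+1)]
    apply Real.rpow_lt_rpow_of_exponent_lt one_lt_two
    push_cast
    exact Nat.lt_floor_add_one _
  have hxge : 2 ^ j * x₀ ≤ x := by
    rw [← le_div_iff₀ hx0]; exact hp1
  have hxle : x ≤ 2 ^ (j + 1) * x₀ := by
    rw [← div_le_iff₀ hx0]; exact hp2.le
  have hT1 : T (2 ^ (j+1) * x₀) ≤ T x := hTanti hxle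
  have hT2 : θ ^ (j+1) * T x₀ ≤ T (2 ^ (j+1) * x₀) := stmt4aux_chain_up hx₀ hθ0 h (j+1)
  calc C * (2 * θ) ^ j = (2 ^ j * x₀) * (θ ^ (j+1) * T x₀) := by
        rw [mul_pow]; ring
    _ ≤ (2 ^ j * x₀) * T x := by
        apply mul_le_mul_of_nonneg_left (le_trans hT2 hT1)
        positivity
    _ ≤ x * T x := mul_le_mul_of_nonneg_right hxge (hT0 x)

lemma stmt4aux_chain_down {T : ℝ → ℝ} {ρ x₁ : ℝ} (hx₁ : 1 ≤ x₁) (hρ0 : 0 < ρ)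
    (h : ∀ x ≥ x₁, T x ≤ ρ * T (2 * x)) (v : ℝ) :
    ∀ j : ℕ, x₁ ≤ v / 2 ^ j → T (v / 2 ^ j) ≤ ρ ^ j * T v := by
  intro j
  induction j with
  | zero => simp
  | succ j ih =>
    intro hj
    have hpow : (0:ℝ) < 2 ^ (j+1) := pow_pos two_pos _
    have hq : (0:ℝ) < v / 2 ^ (j+1) := lt_of_lt_of_le (lt_of_lt_of_le one_pos hx₁) hj
    have hv0 : 0 < v := by
      have hveq : v = v / 2 ^ (j+1) * 2 ^ (j+1) := by field_simp
      nlinarith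
    have hle : v / 2 ^ (j+1) ≤ v / 2 ^ j :=
      div_le_div_of_nonneg_left hv0.le (pow_pos two_pos j)
        (pow_le_pow_right₀ one_le_two (Nat.le_succ j))
    have hstep := h (v / 2 ^ (j+1)) hj
    have heq : 2 * (v / 2 ^ (j+1)) = v / 2 ^ j := by
      field_simp
      ring
    rw [heq] at hstep
    have hih := ih (le_trans hj hle)
    calc T (v / 2 ^ (j+1)) ≤ ρ * T (v / 2 ^ j) := hstep
      _ ≤ ρ * (ρ ^ j * T v) := mul_le_mul_of_nonneg_left hih hρ0.le
      _ = ρ ^ (j+1) * T v := by ring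

lemma stmt4aux_kar {T : ℝ → ℝ} {ρ x₁ : ℝ} (hx₁ : 1 ≤ x₁) (hρ0 : 0 < ρ) (hρ2 : ρ < 2)
    (hT0 : ∀ x, 0 ≤ T x)
    (h : ∀ x ≥ x₁, T x ≤ ρ * T (2 * x)) :
    ∀ v ≥ 2 * x₁, ∃ m : ℕ,
      v / 2 ^ m + ∑ i ∈ Finset.range m, (v / 2 ^ i) * T (v / 2 ^ (i + 1))
        ≤ 2 * x₁ + (2 * ρ / (2 - ρ)) * (v * T v) := by
  intro v hv
  have hx₁0 : (0:ℝ) < x₁ := lt_of_lt_of_le one_pos hx₁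
  have hv0 : (0:ℝ) < v := by linarith
  have hvx : (2:ℝ) ≤ v / x₁ := (le_div_iff₀ hx₁0).2 (by linarith [hv])
  have hvx0 : (0:ℝ) < v / x₁ := by linarith
  set m : ℕ := ⌊Real.logb 2 (v / x₁)⌋₊ with hm
  have hlog0 : 0 ≤ Real.logb 2 (v / x₁) := Real.logb_nonneg one_lt_two (by linarith)
  have hxr : (2:ℝ) ^ (Real.logb 2 (v / x₁)) = v / x₁ :=
    Real.rpow_logb two_pos (by norm_num) hvx0
  have hp1 : (2:ℝ) ^ m ≤ v / x₁ := by
    rw [← hxr, ← Real.rpow_natCast 2 m]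
    exact Real.rpow_le_rpow_of_exponent_le one_le_two (Nat.floor_le hlog0)
  have hp2 : v / x₁ < 2 ^ (m + 1) := by
    rw [← hxr, ← Real.rpow_natCast 2 (m+1)]
    apply Real.rpow_lt_rpow_of_exponent_lt one_lt_two
    push_cast
    exact Nat.lt_floor_add_one _
  have hpm : (0:ℝ) < 2 ^ m := pow_pos two_pos m
  have hkey1 : x₁ ≤ v / 2 ^ m := by
    rw [le_div_iff₀ hpm]
    calc x₁ * 2 ^ m = 2 ^ m * x₁ := by ring
      _ ≤ v := by rw [← le_div_iff₀ hx₁0]; exact hp1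
  have hkey2 : v / 2 ^ m ≤ 2 * x₁ := by
    rw [div_le_iff₀ hpm]
    have := (div_lt_iff₀ hx₁0).1 hp2
    calc v ≤ 2 ^ (m+1) * x₁ := le_of_lt this
      _ = 2 * x₁ * 2 ^ m := by ring
  refine ⟨m, ?_⟩
  have hsum : ∑ i ∈ Finset.range m, (v / 2 ^ i) * T (v / 2 ^ (i + 1))
      ≤ (2 * ρ / (2 - ρ)) * (v * T v) := by
    have hstep : ∀ i ∈ Finset.range m, (v / 2 ^ i) * T (v / 2 ^ (i + 1))
        ≤ (ρ * (v * T v)) * (ρ / 2) ^ i := by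
      intro i hi
      have him : i + 1 ≤ m := Finset.mem_range.1 hi
      have hle : v / 2 ^ m ≤ v / 2 ^ (i+1) :=
        div_le_div_of_nonneg_left hv0.le (pow_pos two_pos _)
          (pow_le_pow_right₀ one_le_two him)
      have hchain := stmt4aux_chain_down hx₁ hρ0 h v (i+1) (le_trans hkey1 hle)
      have hvpos : (0:ℝ) ≤ v / 2 ^ i := by positivity
      calc (v / 2 ^ i) * T (v / 2 ^ (i + 1)) ≤ (v / 2 ^ i) * (ρ ^ (i+1) * T v) :=
            mul_le_mul_of_nonneg_left hchain hvpos
        _ = (ρ * (v * T v)) * (ρ / 2) ^ i := by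
            rw [div_pow]
            field_simp
            ring
    calc ∑ i ∈ Finset.range m, (v / 2 ^ i) * T (v / 2 ^ (i + 1))
        ≤ ∑ i ∈ Finset.range m, (ρ * (v * T v)) * (ρ / 2) ^ i := Finset.sum_le_sum hstep
      _ = (ρ * (v * T v)) * ∑ i ∈ Finset.range m, (ρ / 2) ^ i := by rw [Finset.mul_sum]
      _ ≤ (ρ * (v * T v)) * (1 / (1 - ρ / 2)) := by
          apply mul_le_mul_of_nonneg_left
          · exact stmt4aux_geom _ (by positivity) (by linarith) m
          · have := hT0 v
            positivity
      _ = (2 * ρ / (2 - ρ)) * (v * T v) := by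
          field_simp
  linarith

end StmtAux


/-- For α ∈ (0,1), the large deviation condition (LD) implies that
Condition (*) holds automatically. -/
theorem stmt4
    {Ω : Type*} [MeasurableSpace Ω] (P : Measure Ω) [IsProbabilityMeasure P]
    (X : ℕ → Ω → ℝ) (hXmeas : ∀ i, Measurable (X i))
    (hstat : IsStationarySeq P X)
    (α : ℝ) (hα0 : 0 < α) (hα1 : α < 1)
    (hreg : RegVarOf P (X 0) α)
    (a : ℕ → ℝ) (hapos : ∀ n, 0 < a n)
    (hna : Tendsto (fun n : ℕ => (n : ℝ) * (P {ω | a n < |X 0 ω|}).toReal) atTop (nhds 1))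
    (r : ℕ → ℕ) (hrpos : ∀ n, 1 ≤ r n)
    (hrinf : Tendsto r atTop atTop)
    (hrn : Tendsto (fun n : ℕ => (r n : ℝ) / (n : ℝ)) atTop (nhds 0))
    (cp cm : ℝ) (hcp : 0 ≤ cp) (hcm : 0 ≤ cm)
    (hLD : ∀ x : ℝ, 0 < x →
      Tendsto (fun n : ℕ => ((n / r n : ℕ) : ℝ) *
        (P {ω | x * a n < pS X (r n) ω}).toReal) atTop (nhds (cp * x ^ (-α))) ∧
      Tendsto (fun n : ℕ => ((n / r n : ℕ) : ℝ) *
        (P {ω | pS X (r n) ω < -(x * a n)}).toReal) atTop (nhds (cm * x ^ (-α)))) :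
    CondStar P X a r := by
  classical
  obtain ⟨L, hLmeas, hLpos, hSV, hTL0⟩ := hreg
  -- the tail function
  set T : ℝ → ℝ := fun s => (P {ω | s < |X 0 ω|}).toReal with hTdef
  have hTL : ∀ x, 0 < x → T x = x ^ (-α) * L x := hTL0
  have hnaT : Tendsto (fun n : ℕ => (n : ℝ) * T (a n)) atTop (nhds 1) := hna
  have hTanti : Antitone T := by
    intro s t hst
    apply ENNReal.toReal_mono (measure_ne_top P _)
    exact measure_mono (fun ω hω => lt_of_le_of_lt hst hω)
  have hT0 : ∀ s, 0 ≤ T s := fun s => ENNReal.toReal_nonneg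
  have hTpos : ∀ x, 0 < x → 0 < T x := by
    intro x hx
    rw [hTL x hx]
    exact mul_pos (Real.rpow_pos_of_pos hx _) (hLpos x hx)
  -- a n → ∞
  have haInf : Tendsto a atTop atTop := by
    rw [tendsto_atTop]
    intro M
    have hTan : Tendsto (fun n : ℕ => T (a n)) atTop (nhds 0) := by
      have h1 : Tendsto (fun n : ℕ => ((n:ℝ) * T (a n)) / (n:ℝ)) atTop (nhds 0) :=
        hnaT.div_atTop tendsto_natCast_atTop_atTop
      refine h1.congr' ?_
      filter_upwards [eventually_ge_atTop 1] with n hn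
      have : (n:ℝ) ≠ 0 := Nat.cast_ne_zero.2 (by omega)
      field_simp
    set M₁ : ℝ := max M 1 with hM₁
    have hM₁pos : 0 < M₁ := lt_of_lt_of_le one_pos (le_max_right _ _)
    have hev := hTan.eventually_lt_const (hTpos M₁ hM₁pos)
    filter_upwards [hev] with n hn
    by_contra hcon
    push_neg at hcon
    have : a n ≤ M₁ := le_trans hcon.le (le_max_left _ _)
    exact absurd (hTanti this) (not_le.2 hn)
  -- ratio limit along a
  have hratio : ∀ c : ℝ, 0 < c →
      Tendsto (fun n : ℕ => (n : ℝ) * T (c * a n)) atTop (nhds (c ^ (-α))) := by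
    intro c hc
    have h1 : Tendsto (fun n : ℕ => T (c * a n) / T (a n)) atTop (nhds (c ^ (-α))) :=
      (stmt4aux_ratio hSV hLpos hTL hc).comp haInf
    have h2 := hnaT.mul h1
    rw [one_mul] at h2
    refine h2.congr ?_
    intro n
    have hTan : T (a n) ≠ 0 := (hTpos (a n) (hapos n)).ne'
    field_simp
  -- n / a n → 0
  obtain ⟨x₁, hx₁1, hθdir, hρdir⟩ := stmt4aux_halving hα1 hSV hLpos hTL
  have hx₁0 : (0:ℝ) < x₁ := lt_of_lt_of_le one_pos hx₁1
  set θ : ℝ := (2:ℝ) ^ (-((1+α)/2)) with hθdef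
  have hθ0 : 0 < θ := Real.rpow_pos_of_pos two_pos _
  have hθ2 : 1 < 2 * θ := by
    have h0 : ((2:ℝ) ^ (0:ℝ)) < 2 ^ (1 + -((1+α)/2)) := by
      rw [Real.rpow_lt_rpow_left_iff one_lt_two]
      linarith
    rw [Real.rpow_add two_pos, Real.rpow_one, Real.rpow_zero] at h0
    simpa [hθdef] using h0
  have hn_div_a : Tendsto (fun n : ℕ => (n : ℝ) / a n) atTop (nhds 0) := by
    have hxT : Tendsto (fun x => x * T x) atTop atTop :=
      stmt4aux_xT hx₁1 hθ2 hθ0 hTanti hT0 (hTpos x₁ hx₁0) hθdir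
    have haT : Tendsto (fun n : ℕ => a n * T (a n)) atTop atTop := hxT.comp haInf
    have h2 := hnaT.mul haT.inv_tendsto_atTop
    rw [mul_zero] at h2
    refine h2.congr ?_
    intro n
    have h3 : T (a n) ≠ 0 := (hTpos (a n) (hapos n)).ne'
    have h4 : a n ≠ 0 := (hapos n).ne'
    simp only [Pi.inv_apply]
    field_simp
  -- the Karamata constant
  set ρ : ℝ := (2:ℝ) ^ ((1+α)/2) with hρdef
  have hρ0 : 0 < ρ := Real.rpow_pos_of_pos two_pos _
  have hρ2 : ρ < 2 := by
    have h0 : ((2:ℝ) ^ ((1+α)/2)) < 2 ^ (1:ℝ) := by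
      rw [Real.rpow_lt_rpow_left_iff one_lt_two]
      linarith
    rw [Real.rpow_one] at h0
    exact h0
  set Kc : ℝ := 2 * ρ / (2 - ρ) with hKc
  have hKc0 : 0 < Kc := by
    apply div_pos (by linarith) (by linarith)
  -- identical one-dimensional distributions
  have hmap : ∀ i : ℕ, Measure.map (X i) P = Measure.map (X 0) P := by
    intro i
    have hmeas1 : Measurable (fun ω => fun j : ℕ => X (j + i) ω) :=
      measurable_pi_lambda _ (fun j => hXmeas _)
    have hmeas2 : Measurable (fun ω => fun j : ℕ => X j ω) :=
      measurable_pi_lambda _ (fun j => hXmeas _)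
    have h := congrArg (Measure.map (fun f : ℕ → ℝ => f 0)) (hstat i)
    rw [Measure.map_map (measurable_pi_apply 0) hmeas1,
        Measure.map_map (measurable_pi_apply 0) hmeas2] at h
    have e1 : ((fun f : ℕ → ℝ => f 0) ∘ (fun ω => fun j : ℕ => X (j + i) ω)) = X i := by
      funext ω; simp
    have e2 : ((fun f : ℕ → ℝ => f 0) ∘ (fun ω => fun j : ℕ => X j ω)) = X 0 := by
      funext ω; simp
    rwa [e1, e2] at h
  have hmin_eq : ∀ (i : ℕ) (v : ℝ), ∫ ω, min |X i ω| v ∂P = ∫ ω, min |X 0 ω| v ∂P := by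
    intro i v
    have hcont : Continuous fun x : ℝ => min |x| v := continuous_abs.min continuous_const
    rw [← integral_map (hXmeas i).aemeasurable hcont.aestronglyMeasurable,
        ← integral_map (hXmeas 0).aemeasurable hcont.aestronglyMeasurable, hmap i]
  -- integrability of truncated moments
  have hminX : ∀ (j : ℕ) (v : ℝ), 0 ≤ v → Integrable (fun ω => min |X j ω| v) P := by
    intro j v hv
    refine (integrable_const v).mono' ((hXmeas j).abs.min measurable_const).aestronglyMeasurable ?_
    filter_upwards with ω
    rw [Real.norm_eq_abs, abs_of_nonneg (le_min (abs_nonneg _) hv)]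
    exact min_le_right _ _
  -- the truncated first moment bound (Karamata)
  have hMbound : ∀ v : ℝ, 2 * x₁ ≤ v →
      (∫ ω, min |X 0 ω| v ∂P) ≤ 2 * x₁ + Kc * (v * T v) := by
    intro v hv
    have hv0 : (0:ℝ) ≤ v := by linarith
    obtain ⟨m, hm⟩ := stmt4aux_kar hx₁1 hρ0 hρ2 hT0 hρdir v hv
    refine le_trans ?_ hm
    set A : ℕ → Set Ω := fun i => {ω | v / 2 ^ (i+1) < |X 0 ω|} with hA
    have hAmeas : ∀ i, MeasurableSet (A i) := by
      intro i
      exact measurableSet_lt measurable_const (hXmeas 0).abs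
    set g : Ω → ℝ := fun ω =>
      v / 2 ^ m + ∑ i ∈ Finset.range m, (A i).indicator (fun _ => v / 2 ^ i) ω with hg
    have hgint : Integrable g P := by
      apply (integrable_const (v / 2 ^ m)).add
      apply integrable_finset_sum
      intro i _
      exact (integrable_const (v / 2 ^ i)).indicator (hAmeas i)
    have hpt : ∀ ω, min |X 0 ω| v ≤ g ω := by
      intro ω
      have h0 := stmt4aux_ptwise v |X 0 ω| hv0 m
      refine le_trans h0 (le_of_eq ?_)
      have hterm : ∀ i ∈ Finset.range m,
          (if v / 2 ^ (i+1) < |X 0 ω| then v / 2 ^ i else 0)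
            = (A i).indicator (fun _ => v / 2 ^ i) ω := by
        intro i _
        by_cases h : v / 2 ^ (i+1) < |X 0 ω|
        · rw [if_pos h, Set.indicator_apply, if_pos (by exact h)]
        · rw [if_neg h, Set.indicator_apply, if_neg (by exact h)]
      rw [Finset.sum_congr rfl hterm]
    have h1 : (∫ ω, min |X 0 ω| v ∂P) ≤ ∫ ω, g ω ∂P :=
      integral_mono (hminX 0 v hv0) hgint hpt
    refine le_trans h1 (le_of_eq ?_)
    rw [hg]
    rw [integral_add (integrable_const _) (integrable_finset_sum _
      (fun i _ => (integrable_const (v / 2 ^ i)).indicator (hAmeas i)))]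
    rw [integral_const, integral_finset_sum _
      (fun i _ => (integrable_const (v / 2 ^ i)).indicator (hAmeas i))]
    simp only [probReal_univ, measure_univ, ENNReal.toReal_one, one_smul]
    congr 1
    apply Finset.sum_congr rfl
    intro i _
    rw [integral_indicator_const _ (hAmeas i), smul_eq_mul]
    rw [mul_comm]
    rfl
  -- now prove Condition (*)
  intro δ hδ
  set F : ℝ → ENNReal := fun u =>
    Filter.limsup (fun n : ℕ =>
      P {ω | ∃ j ∈ Finset.Icc 1 (n / r n), δ <
        |∑ k ∈ Finset.Icc 1 j, (truncBlock X (a n) (r n) u k ω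
          - ∫ ω', truncBlock X (a n) (r n) u k ω' ∂P)|}) atTop with hF
  show Tendsto F (nhdsWithin 0 (Set.Ioi 0)) (nhds 0)
  -- key bound
  have key : ∀ u : ℝ, 0 < u → F u ≤ ENNReal.ofReal (2 * Kc * u ^ (1-α) / δ + u) := by
    intro u hu
    -- the deterministic sequence bound
    set b : ℕ → ℝ := fun n =>
      2 * (2 * x₁ * ((n:ℝ) / a n) + Kc * u * ((n:ℝ) * T (u * a n))) / δ with hb
    have hblim : Tendsto b atTop (nhds (2 * (2 * x₁ * 0 + Kc * u * u ^ (-α)) / δ)) := by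
      apply Tendsto.div_const
      apply Tendsto.const_mul
      exact (hn_div_a.const_mul _).add ((hratio u hu).const_mul _)
    have hlval : 2 * (2 * x₁ * 0 + Kc * u * u ^ (-α)) / δ = 2 * Kc * u ^ (1-α) / δ := by
      rw [show (1:ℝ) - α = 1 + (-α) by ring, Real.rpow_add hu, Real.rpow_one]
      ring
    rw [hlval] at hblim
    have hbev : ∀ᶠ n in atTop, b n ≤ 2 * Kc * u ^ (1-α) / δ + u :=
      (hblim.eventually_lt_const (by linarith)).mono (fun n hn => le_of_lt hn)
    -- the per-n estimate
    have hmain : ∀ᶠ n in atTop, (P {ω | ∃ j ∈ Finset.Icc 1 (n / r n), δ <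
        |∑ k ∈ Finset.Icc 1 j, (truncBlock X (a n) (r n) u k ω
          - ∫ ω', truncBlock X (a n) (r n) u k ω' ∂P)|})
        ≤ ENNReal.ofReal (b n) := by
      filter_upwards [haInf.eventually_ge_atTop (2 * x₁ / u)] with n han
      have hvge : 2 * x₁ ≤ u * a n := by
        rw [div_le_iff₀ hu] at han
        linarith [han]
      -- notation for this n
      have hanpos : 0 < a n := hapos n
      have hvpos : 0 < u * a n := mul_pos hu hanpos
      set M0 : ℝ := ∫ ω, min |X 0 ω| (u * a n) ∂P with hM0def
      have hM0nonneg : 0 ≤ M0 := integral_nonneg (fun ω => le_min (abs_nonneg _) hvpos.le)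
      -- measurability of blocks
      have hblock : ∀ k : ℕ, Measurable (fun ω => blockS X (r n) k ω) := fun k =>
        Finset.measurable_sum _ (fun i _ => hXmeas _)
      have hYmeas : ∀ k : ℕ, Measurable (fun ω => truncBlock X (a n) (r n) u k ω) := by
        intro k
        unfold truncBlock
        exact Measurable.ite
          (measurableSet_le ((hblock k).abs.div_const _) measurable_const)
          ((hblock k).div_const _) measurable_const
      have hYbd : ∀ (k : ℕ) (ω : Ω), |truncBlock X (a n) (r n) u k ω|
          ≤ min |blockS X (r n) k ω| (u * a n) / a n := by
        intro k ω
        unfold truncBlock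
        split_ifs with h
        · rw [abs_div, abs_of_pos hanpos]
          have hble : |blockS X (r n) k ω| ≤ u * a n := by
            rw [div_le_iff₀ hanpos] at h
            linarith
          rw [min_eq_left hble]
        · rw [abs_zero]
          exact div_nonneg (le_min (abs_nonneg _) hvpos.le) hanpos.le
      have hYint : ∀ k : ℕ, Integrable (fun ω => truncBlock X (a n) (r n) u k ω) P := by
        intro k
        refine (integrable_const u).mono' (hYmeas k).aestronglyMeasurable ?_
        filter_upwards with ω
        rw [Real.norm_eq_abs]
        refine le_trans (hYbd k ω) ?_
        rw [div_le_iff₀ hanpos]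
        exact min_le_right _ _
      have hminblock_int : ∀ k : ℕ,
          Integrable (fun ω => min |blockS X (r n) k ω| (u * a n)) P := by
        intro k
        refine (integrable_const (u * a n)).mono'
          ((hblock k).abs.min measurable_const).aestronglyMeasurable ?_
        filter_upwards with ω
        rw [Real.norm_eq_abs, abs_of_nonneg (le_min (abs_nonneg _) hvpos.le)]
        exact min_le_right _ _
      -- per block first-moment bound
      have hEk : ∀ k : ℕ, (∫ ω, |truncBlock X (a n) (r n) u k ω| ∂P)
          ≤ (r n : ℝ) * M0 / a n := by
        intro k
        have h1 : (∫ ω, |truncBlock X (a n) (r n) u k ω| ∂P)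
            ≤ ∫ ω, min |blockS X (r n) k ω| (u * a n) / a n ∂P :=
          integral_mono (hYint k).abs ((hminblock_int k).div_const _) (hYbd k)
        rw [integral_div] at h1
        refine le_trans h1 ?_
        rw [div_le_div_iff_of_pos_right hanpos]
        have h3 : (∫ ω, min |blockS X (r n) k ω| (u * a n) ∂P)
            ≤ ∫ ω, ∑ i ∈ Finset.range (r n), min |X ((k-1)*(r n)+i) ω| (u * a n) ∂P := by
          refine integral_mono (hminblock_int k)
            (integrable_finset_sum _ (fun i _ => hminX _ _ hvpos.le)) ?_
          intro ω
          exact stmt4aux_min_abs_sum (Finset.range (r n))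
            (fun i => X ((k-1)*(r n)+i) ω) _ hvpos.le
        rw [integral_finset_sum _ (fun i _ => hminX _ _ hvpos.le)] at h3
        refine le_trans h3 (le_of_eq ?_)
        rw [Finset.sum_congr rfl (fun i _ => hmin_eq ((k-1)*(r n)+i) (u * a n))]
        rw [Finset.sum_const, Finset.card_range, nsmul_eq_mul]
      -- the centered absolute sum
      set Z : Ω → ℝ := fun ω => ∑ k ∈ Finset.Icc 1 (n / r n),
        |truncBlock X (a n) (r n) u k ω
          - ∫ ω', truncBlock X (a n) (r n) u k ω' ∂P| with hZdef
      have hZ0 : ∀ ω, 0 ≤ Z ω := fun ω => Finset.sum_nonneg fun k _ => abs_nonneg _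
      have hZmeas : Measurable Z :=
        Finset.measurable_sum _ (fun k _ => ((hYmeas k).sub measurable_const).abs)
      have hZint : Integrable Z P :=
        integrable_finset_sum _ (fun k _ => ((hYint k).sub (integrable_const _)).abs)
      have hsub : {ω | ∃ j ∈ Finset.Icc 1 (n / r n), δ <
          |∑ k ∈ Finset.Icc 1 j, (truncBlock X (a n) (r n) u k ω
            - ∫ ω', truncBlock X (a n) (r n) u k ω' ∂P)|}
          ⊆ {ω | ENNReal.ofReal δ ≤ ENNReal.ofReal (Z ω)} := by
        rintro ω ⟨j, hj, hδj⟩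
        have hss : Finset.Icc 1 j ⊆ Finset.Icc 1 (n / r n) :=
          Finset.Icc_subset_Icc le_rfl (Finset.mem_Icc.1 hj).2
        have h1 : |∑ k ∈ Finset.Icc 1 j, (truncBlock X (a n) (r n) u k ω
            - ∫ ω', truncBlock X (a n) (r n) u k ω' ∂P)| ≤ Z ω :=
          le_trans (Finset.abs_sum_le_sum_abs _ _)
            (Finset.sum_le_sum_of_subset_of_nonneg hss (fun k _ _ => abs_nonneg _))
        exact ENNReal.ofReal_le_ofReal (le_trans (le_of_lt hδj) h1)
      -- Markov inequality
      have hmark : P {ω | ENNReal.ofReal δ ≤ ENNReal.ofReal (Z ω)}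
          ≤ ENNReal.ofReal ((∫ ω, Z ω ∂P) / δ) := by
        have h2 := meas_ge_le_lintegral_div (μ := P)
          (f := fun ω => ENNReal.ofReal (Z ω)) hZmeas.ennreal_ofReal.aemeasurable
          (ε := ENNReal.ofReal δ) (by simp [ENNReal.ofReal_eq_zero]; linarith)
          ENNReal.ofReal_ne_top
        refine le_trans h2 ?_
        rw [← ofReal_integral_eq_lintegral_ofReal hZint (Filter.Eventually.of_forall hZ0)]
        rw [ENNReal.ofReal_div_of_pos hδ]
      -- bound ∫ Z
      have hterm : ∀ k : ℕ, (∫ ω, |truncBlock X (a n) (r n) u k ω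
          - ∫ ω', truncBlock X (a n) (r n) u k ω' ∂P| ∂P)
          ≤ 2 * ((r n : ℝ) * M0 / a n) := by
        intro k
        have habs : ∀ ω, |truncBlock X (a n) (r n) u k ω
            - ∫ ω', truncBlock X (a n) (r n) u k ω' ∂P|
            ≤ |truncBlock X (a n) (r n) u k ω|
              + |∫ ω', truncBlock X (a n) (r n) u k ω' ∂P| := by
          intro ω
          have := norm_sub_le (truncBlock X (a n) (r n) u k ω)
            (∫ ω', truncBlock X (a n) (r n) u k ω' ∂P)
          simpa [Real.norm_eq_abs] using this
        have heq : (∫ ω, (|truncBlock X (a n) (r n) u k ω|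
              + |∫ ω', truncBlock X (a n) (r n) u k ω' ∂P|) ∂P)
            = (∫ ω, |truncBlock X (a n) (r n) u k ω| ∂P)
              + |∫ ω', truncBlock X (a n) (r n) u k ω' ∂P| := by
          rw [integral_add (hYint k).abs (integrable_const _), integral_const]
          simp [measure_univ]
        have h1 : (∫ ω, |truncBlock X (a n) (r n) u k ω
              - ∫ ω', truncBlock X (a n) (r n) u k ω' ∂P| ∂P)
            ≤ (∫ ω, |truncBlock X (a n) (r n) u k ω| ∂P)
              + |∫ ω', truncBlock X (a n) (r n) u k ω' ∂P| := by
          refine le_trans (integral_mono (((hYint k).sub (integrable_const _)).abs)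
            ((hYint k).abs.add (integrable_const _)) habs) (le_of_eq heq)
        have h2 : |∫ ω', truncBlock X (a n) (r n) u k ω' ∂P|
            ≤ ∫ ω, |truncBlock X (a n) (r n) u k ω| ∂P := by
          have := norm_integral_le_integral_norm (μ := P)
            (f := fun ω' => truncBlock X (a n) (r n) u k ω')
          simpa [Real.norm_eq_abs] using this
        have h3 := hEk k
        linarith
      have hZle : (∫ ω, Z ω ∂P) ≤ 2 * (n : ℝ) * M0 / a n := by
        simp only [hZdef]
        have hint : ∀ k ∈ Finset.Icc 1 (n / r n), Integrable (fun ω =>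
            |truncBlock X (a n) (r n) u k ω
              - ∫ ω', truncBlock X (a n) (r n) u k ω' ∂P|) P :=
          fun k _ => ((hYint k).sub (integrable_const _)).abs
        rw [integral_finset_sum _ hint]
        have hkr : ((n / r n : ℕ) : ℝ) * (r n : ℝ) ≤ (n : ℝ) := by
          exact_mod_cast Nat.div_mul_le_self n (r n)
        calc ∑ k ∈ Finset.Icc 1 (n / r n), ∫ ω, |truncBlock X (a n) (r n) u k ω
              - ∫ ω', truncBlock X (a n) (r n) u k ω' ∂P| ∂P
            ≤ ∑ k ∈ Finset.Icc 1 (n / r n), 2 * ((r n : ℝ) * M0 / a n) :=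
              Finset.sum_le_sum (fun k _ => hterm k)
          _ = ((n / r n : ℕ) : ℝ) * (2 * ((r n : ℝ) * M0 / a n)) := by
              rw [Finset.sum_const, Nat.card_Icc, nsmul_eq_mul]
              norm_num
          _ = (((n / r n : ℕ) : ℝ) * (r n : ℝ)) * (2 * M0 / a n) := by ring
          _ ≤ (n : ℝ) * (2 * M0 / a n) := by
              apply mul_le_mul_of_nonneg_right hkr
              positivity
          _ = 2 * (n : ℝ) * M0 / a n := by ring
      -- assemble
      have hM0le := hMbound (u * a n) hvge
      have h4 : 2 * (n : ℝ) * M0 / a n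
          ≤ 2 * (2 * x₁ * ((n : ℝ) / a n) + Kc * u * ((n : ℝ) * T (u * a n))) := by
        have h5 : 2 * (n : ℝ) * M0 / a n
            ≤ 2 * (n : ℝ) * (2 * x₁ + Kc * ((u * a n) * T (u * a n))) / a n := by
          gcongr
        refine le_trans h5 (le_of_eq ?_)
        field_simp
      have hfin : (∫ ω, Z ω ∂P) / δ
          ≤ 2 * (2 * x₁ * ((n : ℝ) / a n) + Kc * u * ((n : ℝ) * T (u * a n))) / δ := by
        gcongr
        exact le_trans hZle h4
      exact le_trans (measure_mono hsub) (le_trans hmark (ENNReal.ofReal_le_ofReal hfin))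
    have hfinal : ∀ᶠ n in atTop, (P {ω | ∃ j ∈ Finset.Icc 1 (n / r n), δ <
        |∑ k ∈ Finset.Icc 1 j, (truncBlock X (a n) (r n) u k ω
          - ∫ ω', truncBlock X (a n) (r n) u k ω' ∂P)|})
        ≤ ENNReal.ofReal (2 * Kc * u ^ (1-α) / δ + u) := by
      filter_upwards [hmain, hbev] with n h1 h2
      exact le_trans h1 (ENNReal.ofReal_le_ofReal h2)
    exact Filter.limsup_le_of_le (by isBoundedDefault) hfinal
  -- squeeze
  have hupper : Tendsto (fun u : ℝ => ENNReal.ofReal (2 * Kc * u ^ (1-α) / δ + u))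
      (nhdsWithin 0 (Set.Ioi 0)) (nhds 0) := by
    have hrp : Tendsto (fun u : ℝ => u ^ (1-α)) (nhdsWithin 0 (Set.Ioi 0)) (nhds 0) := by
      have hc := (Real.continuousAt_rpow_const 0 (1-α) (Or.inr (by linarith))).tendsto
      rw [Real.zero_rpow (by linarith : (1:ℝ) - α ≠ 0)] at hc
      exact hc.mono_left nhdsWithin_le_nhds
    have hid : Tendsto (fun u : ℝ => u) (nhdsWithin 0 (Set.Ioi 0)) (nhds 0) :=
      (continuous_id.tendsto 0).mono_left nhdsWithin_le_nhds
    have hinner : Tendsto (fun u : ℝ => 2 * Kc * u ^ (1-α) / δ + u)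
        (nhdsWithin 0 (Set.Ioi 0)) (nhds 0) := by
      have := ((hrp.const_mul (2 * Kc)).div_const δ).add hid
      simpa using this
    have := (ENNReal.continuous_ofReal.tendsto 0).comp hinner
    simpa [Function.comp_def] using this
  refine tendsto_of_tendsto_of_tendsto_of_le_of_le' tendsto_const_nhds hupper ?_ ?_
  · filter_upwards with u
    exact bot_le
  · filter_upwards [self_mem_nhdsWithin] with u hu
    exact key u hu
end
end

section
/- Suppose (X_n) is strictly stationary and regularly varying with index α ∈ (0,2), n·P(|X_1|>a_n)→1, k_n = ⌊n/r_n⌋ = o(n^t) for some 0 < t < 1, and (l_n) is a sequence of positive reals with l_n/n^q → 1 where q = (1/2)·min{ 1/α, (1−t)/(1+α) }. Then for every γ > 0, k_n · P( |S_{l_n}| > γ a_n ) → 0 as n → ∞ (here S_{l_n} denotes the sum of the first ⌊l_n⌋ terms). -/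
open MeasureTheory Filter Set
noncomputable section

lemma stmt7_arith (α t q ε : ℝ) (hα0 : 0 < α) (ht0 : 0 < t) (ht1 : t < 1)
    (hq : q = (min (1 / α) ((1 - t) / (1 + α))) / 2)
    (hε : ε = min (α/2) (α*(1-t)/8)) :
    0 < q ∧ 0 < ε ∧ ε ≤ α/2 ∧ q * (α + ε) < 1 ∧
      t + q + (q - 1/(α+ε))*(α-ε) < 0 := by
  have hα1 : (0:ℝ) < 1 + α := by linarith
  have ht1' : (0:ℝ) < 1 - t := by linarith
  have hq0 : 0 < q := by
    rw [hq]
    have h1 : 0 < 1/α := by positivity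
    have h2 : 0 < (1-t)/(1+α) := by positivity
    have := lt_min h1 h2
    linarith
  have hqa : q * (2*α) ≤ 1 := by
    have h1 : min (1/α) ((1-t)/(1+α)) ≤ 1/α := min_le_left _ _
    have h2 : (1/α) * α = 1 := by field_simp
    rw [hq]; nlinarith
  have hqt : q * (1+α) ≤ (1-t)/2 := by
    have h1 : min (1/α) ((1-t)/(1+α)) ≤ (1-t)/(1+α) := min_le_right _ _
    have h2 : ((1-t)/(1+α)) * (1+α) = 1 - t := by field_simp
    rw [hq]; nlinarith
  have hε0 : 0 < ε := by rw [hε]; exact lt_min (by linarith) (by nlinarith)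
  have hεa : ε ≤ α/2 := by rw [hε]; exact min_le_left _ _
  have hεb : ε ≤ α*(1-t)/8 := by rw [hε]; exact min_le_right _ _
  have hβ₂ : 0 < α + ε := by linarith
  have hqβ₂ : q * (α + ε) < 1 := by nlinarith
  refine ⟨hq0, hε0, hεa, hqβ₂, ?_⟩
  have hdiv : (α - 2*ε)/α ≤ (α-ε)/(α+ε) := by
    rw [div_le_div_iff₀ hα0 hβ₂]; nlinarith
  have heq1 : (α - 2*ε)/α = 1 - 2*ε/α := by field_simp
  have h2εα : 2*ε/α ≤ (1-t)/4 := by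
    rw [div_le_iff₀ hα0]; nlinarith
  have hd : 1 - (1-t)/4 ≤ (α-ε)/(α+ε) := by rw [heq1] at hdiv; linarith
  have hexp : (q - 1/(α+ε))*(α-ε) = q*(α-ε) - (α-ε)/(α+ε) := by
    field_simp
  have hqβ₁ : q*(α-ε) ≤ q*α := mul_le_mul_of_nonneg_left (by linarith) (le_of_lt hq0)
  rw [hexp]
  nlinarith

lemma stmt7_dyadic_exists (u : ℝ) (hu : 1 ≤ u) : ∃ k : ℕ, (2:ℝ)^k ≤ u ∧ u < 2^(k+1) := by
  have hf1 : 1 ≤ ⌊u⌋₊ := Nat.le_floor (by exact_mod_cast hu)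
  refine ⟨Nat.log 2 ⌊u⌋₊, ?_, ?_⟩
  · have h1 : 2 ^ Nat.log 2 ⌊u⌋₊ ≤ ⌊u⌋₊ := Nat.pow_log_le_self 2 (by omega)
    have h2 : (⌊u⌋₊ : ℝ) ≤ u := Nat.floor_le (by linarith)
    calc (2:ℝ)^(Nat.log 2 ⌊u⌋₊) = ((2^(Nat.log 2 ⌊u⌋₊) : ℕ) : ℝ) := by push_cast; ring
      _ ≤ (⌊u⌋₊ : ℝ) := by exact_mod_cast h1
      _ ≤ u := h2
  · have h3 : u < ⌊u⌋₊ + 1 := Nat.lt_floor_add_one u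
    have h4 : ⌊u⌋₊ < 2 ^ (Nat.log 2 ⌊u⌋₊ + 1) := Nat.lt_pow_succ_log_self (by norm_num) _
    have h5 : ⌊u⌋₊ + 1 ≤ 2 ^ (Nat.log 2 ⌊u⌋₊ + 1) := h4
    calc u < (⌊u⌋₊ : ℝ) + 1 := h3
      _ ≤ ((2 ^ (Nat.log 2 ⌊u⌋₊ + 1) : ℕ) : ℝ) := by exact_mod_cast h5
      _ = (2:ℝ) ^ (Nat.log 2 ⌊u⌋₊ + 1) := by push_cast; ring

lemma stmt7_step_iter_upper (F : ℝ → ℝ) (ρ X0 : ℝ) (hρ : 0 ≤ ρ)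
    (hX0 : 1 ≤ X0) (hstep : ∀ x, X0 ≤ x → F (2*x) ≤ ρ * F x) :
    ∀ k : ℕ, F (2^k * X0) ≤ ρ^k * F X0 := by
  intro k
  induction k with
  | zero => simp
  | succ k ih =>
    have hx : X0 ≤ 2^k * X0 := le_mul_of_one_le_left (by linarith) (one_le_pow₀ (by norm_num))
    have := hstep _ hx
    have h2 : F (2^(k+1) * X0) = F (2 * (2^k * X0)) := by ring_nf
    rw [h2]
    calc F (2 * (2^k * X0)) ≤ ρ * F (2^k * X0) := this
      _ ≤ ρ * (ρ^k * F X0) := mul_le_mul_of_nonneg_left ih hρ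
      _ = ρ^(k+1) * F X0 := by ring

lemma stmt7_pow_bound_upper (F : ℝ → ℝ) (hanti : Antitone F) (hFnn : ∀ x, 0 ≤ F x)
    (β X0 : ℝ) (hβ : 0 < β) (hX0 : 1 ≤ X0)
    (hstep : ∀ x, X0 ≤ x → F (2*x) ≤ 2^(-β) * F x) :
    ∀ x, X0 ≤ x → F x ≤ (F X0 * (2*X0)^β) * x ^ (-β) := by
  intro x hx
  have hX0pos : (0:ℝ) < X0 := by linarith
  have hxpos : (0:ℝ) < x := by linarith
  have hu : 1 ≤ x / X0 := (one_le_div hX0pos).2 hx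
  obtain ⟨k, hk1, hk2⟩ := stmt7_dyadic_exists (x / X0) hu
  have hρ : (0:ℝ) ≤ 2^(-β) := Real.rpow_nonneg (by norm_num) _
  have h1 : F x ≤ F (2^k * X0) := by
    apply hanti
    rw [← le_div_iff₀ hX0pos]
    exact hk1
  have h2 : F (2^k * X0) ≤ (2^(-β))^k * F X0 := stmt7_step_iter_upper F _ _ hρ hX0 hstep k
  have h3 : ((2:ℝ)^(-β))^k = ((2:ℝ)^k) ^ (-β) := by
    rw [← Real.rpow_natCast ((2:ℝ)^(-β)) k, ← Real.rpow_natCast (2:ℝ) k,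
      ← Real.rpow_mul (by norm_num), ← Real.rpow_mul (by norm_num)]
    ring_nf
  have h4 : x / (2 * X0) ≤ (2:ℝ)^k := by
    have hx' : x < 2^(k+1) * X0 := (div_lt_iff₀ hX0pos).1 hk2
    rw [div_le_iff₀ (by positivity)]
    have h2k : (2:ℝ)^(k+1) = 2 * 2^k := by ring
    rw [h2k] at hx'
    nlinarith
  have h5 : ((2:ℝ)^k) ^ (-β) ≤ (x / (2*X0)) ^ (-β) := by
    apply Real.rpow_le_rpow_of_nonpos (by positivity) h4 (by linarith)
  have h6 : (x / (2*X0)) ^ (-β) = (2*X0)^β * x^(-β) := by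
    rw [Real.div_rpow (le_of_lt hxpos) (by positivity),
      Real.rpow_neg (by positivity : (0:ℝ) ≤ 2*X0) ]
    field_simp
  calc F x ≤ F (2^k * X0) := h1
    _ ≤ (2^(-β))^k * F X0 := h2
    _ = ((2:ℝ)^k)^(-β) * F X0 := by rw [h3]
    _ ≤ (x / (2*X0))^(-β) * F X0 := mul_le_mul_of_nonneg_right h5 (hFnn X0)
    _ = (F X0 * (2*X0)^β) * x^(-β) := by rw [h6]; ring

lemma stmt7_step_iter_lower (F : ℝ → ℝ) (ρ X0 : ℝ) (hρ : 0 ≤ ρ)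
    (hX0 : 1 ≤ X0) (hstep : ∀ x, X0 ≤ x → ρ * F x ≤ F (2*x)) :
    ∀ k : ℕ, ρ^k * F X0 ≤ F (2^k * X0) := by
  intro k
  induction k with
  | zero => simp
  | succ k ih =>
    have hx : X0 ≤ 2^k * X0 := le_mul_of_one_le_left (by linarith) (one_le_pow₀ (by norm_num))
    have h2 : F (2^(k+1) * X0) = F (2 * (2^k * X0)) := by ring_nf
    rw [h2]
    calc ρ^(k+1) * F X0 = ρ * (ρ^k * F X0) := by ring
      _ ≤ ρ * F (2^k * X0) := mul_le_mul_of_nonneg_left ih hρ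
      _ ≤ F (2 * (2^k * X0)) := hstep _ hx

lemma stmt7_pow_bound_lower (F : ℝ → ℝ) (hanti : Antitone F)
    (β X0 : ℝ) (hβ : 0 < β) (hX0 : 1 ≤ X0) (hFX0 : 0 ≤ F X0)
    (hstep : ∀ x, X0 ≤ x → 2^(-β) * F x ≤ F (2*x)) :
    ∀ x, X0 ≤ x → (F X0 * (2/X0)^(-β)) * x^(-β) ≤ F x := by
  intro x hx
  have hX0pos : (0:ℝ) < X0 := by linarith
  have hxpos : (0:ℝ) < x := by linarith
  have hu : 1 ≤ x / X0 := (one_le_div hX0pos).2 hx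
  obtain ⟨k, hk1, hk2⟩ := stmt7_dyadic_exists (x / X0) hu
  have hρ : (0:ℝ) ≤ 2^(-β) := Real.rpow_nonneg (by norm_num) _
  have h1 : F (2^(k+1) * X0) ≤ F x := by
    apply hanti
    have := (div_lt_iff₀ hX0pos).1 hk2
    linarith
  have h2 : (2^(-β))^(k+1) * F X0 ≤ F (2^(k+1) * X0) :=
    stmt7_step_iter_lower F _ _ hρ hX0 hstep (k+1)
  have h3 : ((2:ℝ)^(-β))^(k+1) = ((2:ℝ)^(k+1)) ^ (-β) := by
    rw [← Real.rpow_natCast ((2:ℝ)^(-β)) (k+1), ← Real.rpow_natCast (2:ℝ) (k+1),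
      ← Real.rpow_mul (by norm_num), ← Real.rpow_mul (by norm_num)]
    ring_nf
  have h4 : (2:ℝ)^(k+1) ≤ (2/X0) * x := by
    have h2k : (2:ℝ)^(k+1) = 2 * 2^k := by ring
    have := (le_div_iff₀ hX0pos).1 hk1
    rw [h2k]
    rw [div_mul_eq_mul_div, le_div_iff₀ hX0pos]
    nlinarith
  have h5 : ((2/X0) * x) ^ (-β) ≤ ((2:ℝ)^(k+1)) ^ (-β) :=
    Real.rpow_le_rpow_of_nonpos (by positivity) h4 (by linarith)
  have h6 : ((2/X0) * x) ^ (-β) = (2/X0)^(-β) * x^(-β) :=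
    Real.mul_rpow (by positivity) (le_of_lt hxpos)
  calc (F X0 * (2/X0)^(-β)) * x^(-β) = ((2/X0) * x)^(-β) * F X0 := by rw [h6]; ring
    _ ≤ ((2:ℝ)^(k+1))^(-β) * F X0 := mul_le_mul_of_nonneg_right h5 hFX0
    _ = (2^(-β))^(k+1) * F X0 := by rw [h3]
    _ ≤ F (2^(k+1) * X0) := h2
    _ ≤ F x := h1

lemma stmt7_marginal_eq {Ω : Type*} [MeasurableSpace Ω] (P : Measure Ω)
    (X : ℕ → Ω → ℝ) (hXmeas : ∀ i, Measurable (X i)) (hstat : IsStationarySeq P X)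
    (i : ℕ) (u : ℝ) : P {ω | u < |X i ω|} = P {ω | u < |X 0 ω|} := by
  have h := hstat i
  set S : Set (ℕ → ℝ) := (fun y : ℕ → ℝ => |y 0|) ⁻¹' (Set.Ioi u) with hS
  have hSm : MeasurableSet S := ((measurable_pi_apply 0).abs) measurableSet_Ioi
  have hT : Measurable (fun ω => fun j : ℕ => X (j + i) ω) :=
    measurable_pi_lambda _ (fun j => hXmeas (j + i))
  have hT0 : Measurable (fun ω => fun j : ℕ => X j ω) :=
    measurable_pi_lambda _ (fun j => hXmeas j)
  have h1 := congrArg (fun μ => μ S) h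
  rw [Measure.map_apply hT hSm, Measure.map_apply hT0 hSm] at h1
  have e1 : (fun ω => fun j : ℕ => X (j + i) ω) ⁻¹' S = {ω | u < |X i ω|} := by
    ext ω; simp [hS]
  have e2 : (fun ω => fun j : ℕ => X j ω) ⁻¹' S = {ω | u < |X 0 ω|} := by
    ext ω; simp [hS]
  rw [e1, e2] at h1
  exact h1

lemma stmt7_union_bound {Ω : Type*} [MeasurableSpace Ω] (P : Measure Ω) [IsProbabilityMeasure P]
    (X : ℕ → Ω → ℝ) (hXmeas : ∀ i, Measurable (X i)) (hstat : IsStationarySeq P X)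
    (m : ℕ) (hm : 1 ≤ m) (s : ℝ) :
    (P {ω | s < |pS X m ω|}).toReal ≤ m * (P {ω | s / m < |X 0 ω|}).toReal := by
  have hmpos : (0:ℝ) < m := by exact_mod_cast hm
  have hsub : {ω | s < |pS X m ω|} ⊆ ⋃ i ∈ Finset.range m, {ω | s / m < |X i ω|} := by
    intro ω hω
    simp only [Set.mem_setOf_eq] at hω
    by_contra hc
    simp only [Set.mem_iUnion, Set.mem_setOf_eq, not_exists] at hc
    have hb : ∀ i ∈ Finset.range m, |X i ω| ≤ s / m := by
      intro i hi
      have := hc i hi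
      linarith [this]
    have h1 : |pS X m ω| ≤ ∑ i ∈ Finset.range m, |X i ω| :=
      Finset.abs_sum_le_sum_abs _ _
    have h2 : ∑ i ∈ Finset.range m, |X i ω| ≤ ∑ i ∈ Finset.range m, s / m :=
      Finset.sum_le_sum hb
    simp only [Finset.sum_const, Finset.card_range, nsmul_eq_mul] at h2
    rw [mul_div_cancel₀ _ (ne_of_gt hmpos)] at h2
    linarith
  have h1 : P {ω | s < |pS X m ω|} ≤ ∑ i ∈ Finset.range m, P {ω | s / m < |X i ω|} :=
    le_trans (measure_mono hsub) (measure_biUnion_finset_le _ _)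
  have h2 : ∀ i ∈ Finset.range m, P {ω | s / m < |X i ω|} = P {ω | s / m < |X 0 ω|} :=
    fun i _ => stmt7_marginal_eq P X hXmeas hstat i _
  rw [Finset.sum_congr rfl h2, Finset.sum_const, Finset.card_range] at h1
  have h3 : (P {ω | s < |pS X m ω|}).toReal ≤ (m • P {ω | s / m < |X 0 ω|}).toReal := by
    apply ENNReal.toReal_mono _ h1
    simp [ENNReal.mul_ne_top, measure_ne_top]
  rwa [nsmul_eq_mul, ENNReal.toReal_mul] at h3

set_option maxHeartbeats 1000000 in
/-- Under regular variation with index α ∈ (0,2), k_n = o(n^t) and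
l_n ~ n^q with q = (1/2)·min{1/α, (1−t)/(1+α)}, it holds that
k_n · P(|S_{⌊l_n⌋}| > γ a_n) → 0 for every γ > 0. -/
theorem stmt7
    {Ω : Type*} [MeasurableSpace Ω] (P : Measure Ω) [IsProbabilityMeasure P]
    (X : ℕ → Ω → ℝ) (hXmeas : ∀ i, Measurable (X i))
    (hstat : IsStationarySeq P X)
    (α : ℝ) (hα0 : 0 < α) (hα2 : α < 2)
    (hreg : RegVarOf P (X 0) α)
    (a : ℕ → ℝ) (hapos : ∀ n, 0 < a n)
    (hna : Tendsto (fun n : ℕ => (n : ℝ) * (P {ω | a n < |X 0 ω|}).toReal) atTop (nhds 1))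
    (r : ℕ → ℕ) (hrpos : ∀ n, 1 ≤ r n)
    (hrinf : Tendsto r atTop atTop)
    (hrn : Tendsto (fun n : ℕ => (r n : ℝ) / (n : ℝ)) atTop (nhds 0))
    (t : ℝ) (ht0 : 0 < t) (ht1 : t < 1)
    (hkn : Tendsto (fun n : ℕ => ((n / r n : ℕ) : ℝ) / (n : ℝ) ^ t) atTop (nhds 0))
    (q : ℝ) (hq : q = (min (1 / α) ((1 - t) / (1 + α))) / 2)
    (l : ℕ → ℝ) (hlpos : ∀ n, 0 < l n)
    (hl : Tendsto (fun n : ℕ => l n / (n : ℝ) ^ q) atTop (nhds 1)) :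
    ∀ γ : ℝ, 0 < γ →
      Tendsto (fun n : ℕ => ((n / r n : ℕ) : ℝ) *
          (P {ω | γ * a n < |pS X ⌊l n⌋₊ ω|}).toReal) atTop (nhds 0) := by
  intro γ hγ
  obtain ⟨L, hLmeas, hLpos, hLsv, hLeq⟩ := hreg
  set F : ℝ → ℝ := fun x => (P {ω | x < |X 0 ω|}).toReal with hF
  have hFnn : ∀ x, 0 ≤ F x := fun x => ENNReal.toReal_nonneg
  have hFanti : Antitone F := by
    intro x y hxy
    exact ENNReal.toReal_mono (measure_ne_top P _)
      (measure_mono (fun ω hω => lt_of_le_of_lt hxy hω))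
  have hFeq : ∀ x : ℝ, 0 < x → F x = x ^ (-α) * L x := hLeq
  have hFpos : ∀ x : ℝ, 0 < x → 0 < F x := by
    intro x hx
    rw [hFeq x hx]
    have := hLpos x hx
    positivity
  -- arithmetic facts
  obtain ⟨hq0, hε0', hεa', hqβ₂', he_neg'⟩ :=
    stmt7_arith α t q (min (α/2) (α*(1-t)/8)) hα0 ht0 ht1 hq rfl
  set ε := min (α/2) (α*(1-t)/8) with hε
  set β₁ := α - ε with hβ₁def
  set β₂ := α + ε with hβ₂def
  have hε0 : 0 < ε := hε0'
  have hβ₁ : 0 < β₁ := by rw [hβ₁def]; linarith [hεa', hα0]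
  have hβ₂ : 0 < β₂ := by rw [hβ₂def]; linarith [hε0]
  have h1β₂ : q < 1/β₂ := by
    rw [lt_div_iff₀ hβ₂]; exact hqβ₂'
  set e := t + q + (q - 1/β₂)*β₁ with he
  have he_neg : e < 0 := he_neg'
  -- Potter steps
  have hsv2 : Tendsto (fun x => L (2*x) / L x) atTop (nhds 1) := hLsv 2 (by norm_num)
  have h2ε : (1:ℝ) < 2^ε := Real.one_lt_rpow_iff_of_pos (by norm_num) |>.2 (Or.inl ⟨by norm_num, hε0⟩)
  have h2ε' : (2:ℝ)^(-ε) < 1 :=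
    Real.rpow_lt_one_of_one_lt_of_neg (by norm_num) (by linarith)
  have hev1 : ∀ᶠ x : ℝ in atTop, L (2*x) / L x < 2^ε := hsv2.eventually_lt_const h2ε
  have hev2 : ∀ᶠ x : ℝ in atTop, (2:ℝ)^(-ε) < L (2*x) / L x := hsv2.eventually_const_lt h2ε'
  obtain ⟨X1, hX1⟩ := ((hev1.and hev2).and (eventually_ge_atTop (1:ℝ))).exists_forall_of_atTop
  have hX1ge : (1:ℝ) ≤ X1 := (hX1 X1 le_rfl).2
  have hX1pos : (0:ℝ) < X1 := by linarith
  have hstep1 : ∀ x, X1 ≤ x → F (2*x) ≤ 2^(-β₁) * F x := by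
    intro x hx
    obtain ⟨⟨hlt, _⟩, hx1⟩ := hX1 x hx
    have hxpos : (0:ℝ) < x := by linarith
    have hLx : 0 < L x := hLpos x hxpos
    have hL2x : L (2*x) < 2^ε * L x := by
      rw [div_lt_iff₀ hLx] at hlt; exact hlt
    have hmul : ((2:ℝ)*x) ^ (-α) = 2^(-α) * x^(-α) :=
      Real.mul_rpow (by norm_num) (le_of_lt hxpos)
    rw [hFeq (2*x) (by linarith), hFeq x hxpos, hmul]
    have h2a : (0:ℝ) < 2^(-α) * x^(-α) := by positivity
    have key : 2^(-α) * x^(-α) * L (2*x) ≤ 2^(-α) * x^(-α) * (2^ε * L x) :=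
      mul_le_mul_of_nonneg_left (le_of_lt hL2x) (le_of_lt h2a)
    have hrw : (2:ℝ)^(-α) * 2^ε = 2^(-β₁) := by
      rw [← Real.rpow_add (by norm_num : (0:ℝ) < 2), hβ₁def]
      ring_nf
    calc 2^(-α) * x^(-α) * L (2*x) ≤ 2^(-α) * x^(-α) * (2^ε * L x) := key
      _ = (2^(-α) * 2^ε) * (x^(-α) * L x) := by ring
      _ = 2^(-β₁) * (x^(-α) * L x) := by rw [hrw]
  have hstep2 : ∀ x, X1 ≤ x → 2^(-β₂) * F x ≤ F (2*x) := by
    intro x hx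
    obtain ⟨⟨_, hgt⟩, hx1⟩ := hX1 x hx
    have hxpos : (0:ℝ) < x := by linarith
    have hLx : 0 < L x := hLpos x hxpos
    have hL2x : 2^(-ε) * L x < L (2*x) := by
      rw [lt_div_iff₀ hLx] at hgt; exact hgt
    have hmul : ((2:ℝ)*x) ^ (-α) = 2^(-α) * x^(-α) :=
      Real.mul_rpow (by norm_num) (le_of_lt hxpos)
    rw [hFeq (2*x) (by linarith), hFeq x hxpos, hmul]
    have h2a : (0:ℝ) < 2^(-α) * x^(-α) := by positivity
    have key : 2^(-α) * x^(-α) * (2^(-ε) * L x) ≤ 2^(-α) * x^(-α) * L (2*x) :=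
      mul_le_mul_of_nonneg_left (le_of_lt hL2x) (le_of_lt h2a)
    have hrw : (2:ℝ)^(-α) * 2^(-ε) = 2^(-β₂) := by
      rw [← Real.rpow_add (by norm_num : (0:ℝ) < 2), hβ₂def]
      ring_nf
    calc 2^(-β₂) * (x^(-α) * L x) = (2^(-α) * 2^(-ε)) * (x^(-α) * L x) := by rw [hrw]
      _ = 2^(-α) * x^(-α) * (2^(-ε) * L x) := by ring
      _ ≤ 2^(-α) * x^(-α) * L (2*x) := key
  set C1 := F X1 * (2*X1)^β₁ with hC1def
  have hC1 : 0 ≤ C1 := by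
    have := hFnn X1
    positivity
  have hupper : ∀ x, X1 ≤ x → F x ≤ C1 * x^(-β₁) :=
    stmt7_pow_bound_upper F hFanti hFnn β₁ X1 hβ₁ hX1ge hstep1
  set c2 := F X1 * (2/X1)^(-β₂) with hc2def
  have hc2 : 0 < c2 := by
    have h1 := hFpos X1 hX1pos
    have h2 : (0:ℝ) < (2/X1)^(-β₂) := Real.rpow_pos_of_pos (by positivity) _
    positivity
  have hlower : ∀ x, X1 ≤ x → c2 * x^(-β₂) ≤ F x :=
    stmt7_pow_bound_lower F hFanti β₂ X1 hβ₂ hX1ge (hFnn X1) hstep2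
  -- a n → ∞
  have hFa0 : Tendsto (fun n : ℕ => F (a n)) atTop (nhds 0) := by
    have h1 : Tendsto (fun n : ℕ => ((n:ℝ) * F (a n)) * (1/(n:ℝ))) atTop (nhds (1*0)) :=
      hna.mul tendsto_one_div_atTop_nhds_zero_nat
    rw [one_mul] at h1
    apply h1.congr'
    filter_upwards [eventually_ge_atTop 1] with n hn
    have : (0:ℝ) < n := by exact_mod_cast hn
    field_simp
  have ha_top : Tendsto a atTop atTop := by
    rw [tendsto_atTop]
    intro A
    have hM : 0 < F (max A 1) := hFpos _ (by positivity)
    filter_upwards [hFa0.eventually_lt_const hM] with n hn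
    by_contra h
    push_neg at h
    have h2 : F (max A 1) ≤ F (a n) := hFanti (le_trans (le_of_lt h) (le_max_left A 1))
    linarith
  -- rate to infinity of the lower bound for γ a n / m n
  have hppos : 0 < 1/β₂ - q := by linarith
  set D0 := (γ/2) * (c2/2)^(1/β₂) with hD0def
  have hD0 : 0 < D0 := by
    have : (0:ℝ) < (c2/2)^(1/β₂) := Real.rpow_pos_of_pos (by linarith) _
    positivity
  have hBtop : Tendsto (fun n : ℕ => D0 * (n:ℝ)^(1/β₂ - q)) atTop atTop := by
    apply Tendsto.const_mul_atTop hD0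
    exact (tendsto_rpow_atTop hppos).comp tendsto_natCast_atTop_atTop
  have hnq_top : Tendsto (fun n : ℕ => (n:ℝ)^q) atTop atTop :=
    (tendsto_rpow_atTop hq0).comp tendsto_natCast_atTop_atTop
  -- final constant
  set D := (γ/2)^(-β₁) * ((c2/2)^(1/β₂))^(-β₁) with hDdef
  have hD : 0 ≤ D := by positivity
  set K := 2 * C1 * D with hKdef
  -- limit of the dominating sequence
  have hKlim : Tendsto (fun n : ℕ => K * (n:ℝ)^e) atTop (nhds 0) := by
    have h1 : Tendsto (fun x : ℝ => x^e) atTop (nhds 0) := by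
      have := tendsto_rpow_neg_atTop (show 0 < -e by linarith)
      simpa [neg_neg] using this
    have h2 : Tendsto (fun n : ℕ => ((n:ℝ))^e) atTop (nhds 0) :=
      h1.comp tendsto_natCast_atTop_atTop
    have h3 := h2.const_mul K
    simpa using h3
  apply squeeze_zero' (g := fun n : ℕ => K * (n:ℝ)^e)
  · filter_upwards with n
    exact mul_nonneg (Nat.cast_nonneg _) ENNReal.toReal_nonneg
  · filter_upwards [eventually_ge_atTop 1,
      hkn.eventually_lt_const (show (0:ℝ) < 1 by norm_num),
      hl.eventually_lt_const (show (1:ℝ) < 3/2 by norm_num),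
      hl.eventually_const_lt (show (3:ℝ)/4 < 1 by norm_num),
      hnq_top.eventually_ge_atTop 4,
      hna.eventually_lt_const (show (1:ℝ) < 2 by norm_num),
      ha_top.eventually_ge_atTop X1,
      hBtop.eventually_ge_atTop X1] with n hn1 hkb hl1 hl2 h4 hna2 haX hX1n
    have npos : (0:ℝ) < n := by exact_mod_cast hn1
    have nqpos : (0:ℝ) < (n:ℝ)^q := Real.rpow_pos_of_pos npos q
    set m := ⌊l n⌋₊ with hm
    have hmle : (m:ℝ) ≤ 2*(n:ℝ)^q := by
      have h1 : (m:ℝ) ≤ l n := Nat.floor_le (le_of_lt (hlpos n))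
      have h2 : l n < (3/2) * (n:ℝ)^q := by
        rw [div_lt_iff₀ nqpos] at hl1; linarith
      linarith
    have hmge : (1/2)*(n:ℝ)^q ≤ (m:ℝ) := by
      have h1 : l n - 1 < (m:ℝ) := Nat.sub_one_lt_floor (l n)
      have h2 : (3/4) * (n:ℝ)^q < l n := by
        rw [lt_div_iff₀ nqpos] at hl2; linarith
      linarith
    have hm1 : 1 ≤ m := by
      rcases Nat.eq_zero_or_pos m with h | h
      · exfalso; rw [h] at hmge; simp at hmge; linarith
      · exact h
    have hmpos : (0:ℝ) < m := by exact_mod_cast hm1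
    have hapos' : (0:ℝ) < a n := hapos n
    have hspos : (0:ℝ) < γ * a n := by positivity
    have hub := stmt7_union_bound P X hXmeas hstat m hm1 (γ * a n)
    -- lower bound on a n
    have hFan_le : F (a n) ≤ 2/(n:ℝ) := by
      rw [le_div_iff₀ npos]; nlinarith [hna2]
    have hFan_ge : c2 * (a n)^(-β₂) ≤ F (a n) := hlower _ haX
    have hanb : (0:ℝ) < (a n)^β₂ := Real.rpow_pos_of_pos hapos' _
    have hrw1 : (a n)^β₂ * (a n)^(-β₂) = 1 := by
      rw [← Real.rpow_add hapos']; simp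
    have han_lb : ((c2/2) * (n:ℝ))^(1/β₂) ≤ a n := by
      have h1 : c2 * (a n)^(-β₂) ≤ 2/(n:ℝ) := le_trans hFan_ge hFan_le
      have h2 : (c2/2) * (n:ℝ) ≤ (a n)^β₂ := by
        have h3 : (a n)^β₂ * (c2 * (a n)^(-β₂)) ≤ (a n)^β₂ * (2/(n:ℝ)) :=
          mul_le_mul_of_nonneg_left h1 (le_of_lt hanb)
        have h4 : (a n)^β₂ * (c2 * (a n)^(-β₂)) = c2 := by
          rw [show (a n)^β₂ * (c2 * (a n)^(-β₂)) = c2 * ((a n)^β₂ * (a n)^(-β₂)) by ring,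
            hrw1]; ring
        rw [h4] at h3
        rw [div_mul_eq_mul_div, div_le_iff₀ (by norm_num : (0:ℝ) < 2)]
        calc c2 * (n:ℝ) ≤ ((a n)^β₂ * (2/(n:ℝ))) * (n:ℝ) :=
          mul_le_mul_of_nonneg_right h3 (le_of_lt npos)
          _ = (a n)^β₂ * 2 := by field_simp
      calc ((c2/2) * (n:ℝ))^(1/β₂) ≤ ((a n)^β₂)^(1/β₂) :=
            Real.rpow_le_rpow (by positivity) h2 (by positivity)
        _ = a n := by
            rw [← Real.rpow_mul (le_of_lt hapos'),
              mul_one_div, div_self (ne_of_gt hβ₂), Real.rpow_one]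
    have hA_eq : ((c2/2) * (n:ℝ))^(1/β₂) = (c2/2)^(1/β₂) * (n:ℝ)^(1/β₂) :=
      Real.mul_rpow (by positivity) (le_of_lt npos)
    -- the evaluation point is large
    have hBle : D0 * (n:ℝ)^(1/β₂ - q) ≤ γ * a n / (m:ℝ) := by
      have h1 : γ * (((c2/2) * (n:ℝ))^(1/β₂)) / (2*(n:ℝ)^q) ≤ γ * a n / (m:ℝ) := by
        gcongr
        all_goals first
          | positivity
          | exact han_lb
          | exact hmle
          | linarith
      have h2 : γ * (((c2/2) * (n:ℝ))^(1/β₂)) / (2*(n:ℝ)^q)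
          = D0 * (n:ℝ)^(1/β₂ - q) := by
        rw [hA_eq, Real.rpow_sub npos, hD0def]
        field_simp
      linarith
    have hBpos : (0:ℝ) < D0 * (n:ℝ)^(1/β₂ - q) := by
      have : (0:ℝ) < (n:ℝ)^(1/β₂ - q) := Real.rpow_pos_of_pos npos _
      positivity
    have hxX1 : X1 ≤ γ * a n / (m:ℝ) := le_trans hX1n hBle
    have h9 : F (γ * a n / (m:ℝ)) ≤ C1 * (γ * a n / (m:ℝ))^(-β₁) := hupper _ hxX1
    have h10 : (γ * a n / (m:ℝ))^(-β₁) ≤ (D0 * (n:ℝ)^(1/β₂ - q))^(-β₁) :=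
      Real.rpow_le_rpow_of_nonpos hBpos hBle (by linarith)
    have h11 : (D0 * (n:ℝ)^(1/β₂ - q))^(-β₁) = D * (n:ℝ)^((q - 1/β₂)*β₁) := by
      rw [hD0def, hDdef]
      rw [Real.mul_rpow (by positivity) (Real.rpow_nonneg (le_of_lt npos) _),
        Real.mul_rpow (by positivity) (by positivity),
        ← Real.rpow_mul (le_of_lt npos)]
      ring_nf
    have hF3 : F (γ * a n / (m:ℝ)) ≤ C1 * (D * (n:ℝ)^((q - 1/β₂)*β₁)) := by
      calc F (γ * a n / (m:ℝ)) ≤ C1 * (γ * a n / (m:ℝ))^(-β₁) := h9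
        _ ≤ C1 * (D0 * (n:ℝ)^(1/β₂ - q))^(-β₁) := mul_le_mul_of_nonneg_left h10 hC1
        _ = C1 * (D * (n:ℝ)^((q - 1/β₂)*β₁)) := by rw [h11]
    have hk' : ((n / r n : ℕ):ℝ) ≤ (n:ℝ)^t := by
      have htpos : (0:ℝ) < (n:ℝ)^t := Real.rpow_pos_of_pos npos t
      rw [div_lt_one htpos] at hkb
      exact le_of_lt hkb
    have hterm : ((n / r n : ℕ):ℝ) * (P {ω | γ * a n < |pS X m ω|}).toReal
        ≤ K * (n:ℝ)^e := by
      have step1 : ((n / r n : ℕ):ℝ) * (P {ω | γ * a n < |pS X m ω|}).toReal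
          ≤ ((n / r n : ℕ):ℝ) * ((m:ℝ) * F (γ * a n / (m:ℝ))) :=
        mul_le_mul_of_nonneg_left hub (Nat.cast_nonneg _)
      have step2 : ((n / r n : ℕ):ℝ) * ((m:ℝ) * F (γ * a n / (m:ℝ)))
          ≤ (n:ℝ)^t * ((2*(n:ℝ)^q) * (C1 * (D * (n:ℝ)^((q - 1/β₂)*β₁)))) := by
        have hx1 : (0:ℝ) ≤ (m:ℝ) * F (γ * a n / (m:ℝ)) :=
          mul_nonneg (le_of_lt hmpos) (hFnn _)
        have hx2 : (m:ℝ) * F (γ * a n / (m:ℝ))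
            ≤ (2*(n:ℝ)^q) * (C1 * (D * (n:ℝ)^((q - 1/β₂)*β₁))) := by
          apply mul_le_mul hmle hF3 (hFnn _) (by positivity)
        calc ((n / r n : ℕ):ℝ) * ((m:ℝ) * F (γ * a n / (m:ℝ)))
            ≤ (n:ℝ)^t * ((m:ℝ) * F (γ * a n / (m:ℝ))) :=
              mul_le_mul_of_nonneg_right hk' hx1
          _ ≤ (n:ℝ)^t * ((2*(n:ℝ)^q) * (C1 * (D * (n:ℝ)^((q - 1/β₂)*β₁)))) :=
              mul_le_mul_of_nonneg_left hx2 (Real.rpow_nonneg (le_of_lt npos) t)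
      have step3 : (n:ℝ)^t * ((2*(n:ℝ)^q) * (C1 * (D * (n:ℝ)^((q - 1/β₂)*β₁))))
          = K * (n:ℝ)^e := by
        rw [hKdef, he, Real.rpow_add npos, Real.rpow_add npos]
        ring
      calc ((n / r n : ℕ):ℝ) * (P {ω | γ * a n < |pS X m ω|}).toReal
          ≤ ((n / r n : ℕ):ℝ) * ((m:ℝ) * F (γ * a n / (m:ℝ))) := step1
        _ ≤ (n:ℝ)^t * ((2*(n:ℝ)^q) * (C1 * (D * (n:ℝ)^((q - 1/β₂)*β₁)))) := step2
        _ = K * (n:ℝ)^e := step3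
    exact hterm
  · exact hKlim
end
end

section
/- Let (X_n) be a strictly stationary sequence with α-mixing coefficients (α_m), let n, r_n, k_n be positive integers and l_n < r_n, set S^k_{r_n} = X_{(k−1)r_n+1}+⋯+X_{k r_n} and S^k_{r_n,l_n} = X_{k r_n − l_n + 1}+⋯+X_{k r_n}, and let a_n > 0 and f : ℝ → [0,∞) be a bounded measurable function. Then | E[ exp( − Σ_{k=1}^{k_n} f( a_n^{−1}(S^k_{r_n} − S^k_{r_n,l_n}) ) ) ] − ( E[ exp( − f( a_n^{−1} S_{r_n − l_n} ) ) ] )^{k_n} | ≤ 4 k_n α_{l_n + 1}. -/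
open MeasureTheory Filter Set
noncomputable section

set_option linter.unusedSectionVars false

section Cov
variable {Ω : Type*} (mA mB : MeasurableSpace Ω) {mΩ : MeasurableSpace Ω} (P : Measure Ω)
  [IsProbabilityMeasure P]

lemma aux_integrable_of_bdd {f : Ω → ℝ} (hf : AEStronglyMeasurable f P) {C : ℝ}
    (hC : ∀ ω, |f ω| ≤ C) : Integrable f P :=
  (integrable_const C).mono' hf (Filter.Eventually.of_forall fun ω => by
    simpa [Real.norm_eq_abs] using hC ω)

lemma alphaDep_zero_mem :
    (0:ℝ) ∈ {d : ℝ | ∃ A B : Set Ω, MeasurableSet[mA] A ∧ MeasurableSet[mB] B ∧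
      d = |(P (A ∩ B)).toReal - (P A).toReal * (P B).toReal|} :=
  ⟨∅, ∅, @MeasurableSet.empty Ω mA, @MeasurableSet.empty Ω mB, by simp⟩

lemma alphaDep_set_le_one :
    ∀ d ∈ {d : ℝ | ∃ A B : Set Ω, MeasurableSet[mA] A ∧ MeasurableSet[mB] B ∧
      d = |(P (A ∩ B)).toReal - (P A).toReal * (P B).toReal|}, d ≤ 1 := by
  rintro d ⟨A, B, -, -, rfl⟩
  have h1 : (P (A ∩ B)).toReal ≤ 1 := by
    simpa using ENNReal.toReal_mono ENNReal.one_ne_top (prob_le_one (s := A ∩ B))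
  have h2 : (P A).toReal ≤ 1 := by
    simpa using ENNReal.toReal_mono ENNReal.one_ne_top (prob_le_one (s := A))
  have h3 : (P B).toReal ≤ 1 := by
    simpa using ENNReal.toReal_mono ENNReal.one_ne_top (prob_le_one (s := B))
  have h4 : 0 ≤ (P (A ∩ B)).toReal := ENNReal.toReal_nonneg
  have h5 : 0 ≤ (P A).toReal := ENNReal.toReal_nonneg
  have h6 : 0 ≤ (P B).toReal := ENNReal.toReal_nonneg
  rw [abs_le]; constructor <;> nlinarith

lemma alphaDep_bddAbove :
    BddAbove {d : ℝ | ∃ A B : Set Ω, MeasurableSet[mA] A ∧ MeasurableSet[mB] B ∧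
      d = |(P (A ∩ B)).toReal - (P A).toReal * (P B).toReal|} :=
  ⟨1, fun _ hd => alphaDep_set_le_one mA mB P _ hd⟩

lemma alphaDep_nonneg : 0 ≤ alphaDep P mA mB :=
  le_csSup (alphaDep_bddAbove mA mB P) (alphaDep_zero_mem mA mB P)

lemma alphaDep_le_one : alphaDep P mA mB ≤ 1 :=
  csSup_le ⟨0, alphaDep_zero_mem mA mB P⟩ (alphaDep_set_le_one mA mB P)

lemma cov_abs_le (hmA : mA ≤ mΩ) (hmB : mB ≤ mΩ)
    (g h : Ω → ℝ) (hg : Measurable[mA] g) (hh : Measurable[mB] h)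
    (hg0 : ∀ ω, 0 ≤ g ω) (hg1 : ∀ ω, g ω ≤ 1)
    (hh0 : ∀ ω, 0 ≤ h ω) (hh1 : ∀ ω, h ω ≤ 1) :
    |(∫ ω, g ω * h ω ∂P) - (∫ ω, g ω ∂P) * (∫ ω, h ω ∂P)| ≤ alphaDep P mA mB := by
  classical
  set μ : Measure ℝ := volume.restrict (Set.Ioo (0:ℝ) 1) with hμdef
  haveI : IsProbabilityMeasure μ := ⟨by simp [hμdef, Real.volume_Ioo]⟩
  have hg' : Measurable g := hg.mono hmA le_rfl
  have hh' : Measurable h := hh.mono hmB le_rfl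
  have slice : ∀ c : ℝ, 0 ≤ c → c ≤ 1 → ∫ s, (if s < c then (1:ℝ) else 0) ∂μ = c := by
    intro c hc0 hc1
    have h1 : (fun s => if s < c then (1:ℝ) else 0) = (Set.Iio c).indicator (fun _ => (1:ℝ)) := by
      funext s; by_cases hs : s < c <;> simp [Set.indicator_apply, Set.mem_Iio, hs]
    rw [h1, integral_indicator_const _ measurableSet_Iio]
    have h2 : μ (Set.Iio c) = ENNReal.ofReal c := by
      rw [hμdef, Measure.restrict_apply measurableSet_Iio]
      have h3 : Set.Iio c ∩ Set.Ioo (0:ℝ) 1 = Set.Ioo 0 c := by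
        ext x
        simp only [Set.mem_inter_iff, Set.mem_Iio, Set.mem_Ioo]
        constructor
        · rintro ⟨u1, u2, u3⟩; exact ⟨u2, u1⟩
        · rintro ⟨u1, u2⟩; exact ⟨u2, u1, lt_of_lt_of_le u2 hc1⟩
      rw [h3, Real.volume_Ioo, sub_zero]
    rw [measureReal_def, h2, ENNReal.toReal_ofReal hc0, smul_eq_mul, mul_one]
  set eg : Ω → ℝ → ℝ := fun ω s => if s < g ω then (1:ℝ) else 0 with hegdef
  set eh : Ω → ℝ → ℝ := fun ω t => if t < h ω then (1:ℝ) else 0 with hehdef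
  have megP : Measurable (Function.uncurry eg) := by
    have hs : MeasurableSet {z : Ω × ℝ | z.2 < g z.1} :=
      measurableSet_lt measurable_snd (hg'.comp measurable_fst)
    exact Measurable.ite hs measurable_const measurable_const
  have mehP : Measurable (Function.uncurry eh) := by
    have hs : MeasurableSet {z : Ω × ℝ | z.2 < h z.1} :=
      measurableSet_lt measurable_snd (hh'.comp measurable_fst)
    exact Measurable.ite hs measurable_const measurable_const
  have egbd : ∀ ω s, |eg ω s| ≤ 1 := by
    intro ω s; simp only [hegdef]; split_ifs <;> norm_num
  have ehbd : ∀ ω t, |eh ω t| ≤ 1 := by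
    intro ω t; simp only [hehdef]; split_ifs <;> norm_num
  have mF : Measurable (Function.uncurry fun ω (p : ℝ × ℝ) => eg ω p.1 * eh ω p.2) := by
    have m1 : Measurable (fun z : Ω × (ℝ × ℝ) => eg z.1 z.2.1) :=
      megP.comp (measurable_fst.prodMk (measurable_fst.comp measurable_snd))
    have m2 : Measurable (fun z : Ω × (ℝ × ℝ) => eh z.1 z.2.2) :=
      mehP.comp (measurable_fst.prodMk (measurable_snd.comp measurable_snd))
    exact m1.mul m2
  have hFint : Integrable (Function.uncurry fun ω (p : ℝ × ℝ) => eg ω p.1 * eh ω p.2)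
      (P.prod (μ.prod μ)) := by
    refine aux_integrable_of_bdd _ mF.aestronglyMeasurable (C := 1) fun z => ?_
    calc |eg z.1 z.2.1 * eh z.1 z.2.2| = |eg z.1 z.2.1| * |eh z.1 z.2.2| := abs_mul _ _
      _ ≤ 1 * 1 := mul_le_mul (egbd _ _) (ehbd _ _) (abs_nonneg _) zero_le_one
      _ = 1 := one_mul 1
  have hF1int : Integrable (Function.uncurry eg) (P.prod μ) :=
    aux_integrable_of_bdd _ megP.aestronglyMeasurable (C := 1) fun z => egbd z.1 z.2
  have hF2int : Integrable (Function.uncurry eh) (P.prod μ) :=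
    aux_integrable_of_bdd _ mehP.aestronglyMeasurable (C := 1) fun z => ehbd z.1 z.2
  -- step 1 : E[g h] as a double integral
  have step1 : ∫ ω, g ω * h ω ∂P = ∫ p : ℝ × ℝ, ∫ ω, eg ω p.1 * eh ω p.2 ∂P ∂(μ.prod μ) := by
    have e1 : ∫ ω, g ω * h ω ∂P = ∫ ω, ∫ p : ℝ × ℝ, eg ω p.1 * eh ω p.2 ∂(μ.prod μ) ∂P := by
      refine integral_congr_ae (Filter.Eventually.of_forall fun ω => ?_)
      dsimp only
      rw [integral_prod_mul (fun s => eg ω s) (fun t => eh ω t),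
        slice _ (hg0 ω) (hg1 ω), slice _ (hh0 ω) (hh1 ω)]
    rw [e1, integral_integral_swap hFint]
  -- step 2 : E[g] E[h] as a double integral
  have eqg : ∫ ω, g ω ∂P = ∫ s, ∫ ω, eg ω s ∂P ∂μ := by
    rw [← integral_integral_swap hF1int]
    exact integral_congr_ae (Filter.Eventually.of_forall fun ω => (slice _ (hg0 ω) (hg1 ω)).symm)
  have eqh : ∫ ω, h ω ∂P = ∫ t, ∫ ω, eh ω t ∂P ∂μ := by
    rw [← integral_integral_swap hF2int]
    exact integral_congr_ae (Filter.Eventually.of_forall fun ω => (slice _ (hh0 ω) (hh1 ω)).symm)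
  have step2 : (∫ ω, g ω ∂P) * (∫ ω, h ω ∂P)
      = ∫ p : ℝ × ℝ, (∫ ω, eg ω p.1 ∂P) * (∫ ω, eh ω p.2 ∂P) ∂(μ.prod μ) := by
    rw [eqg, eqh, integral_prod_mul (fun s => ∫ ω, eg ω s ∂P) (fun t => ∫ ω, eh ω t ∂P)]
  have huint : Integrable (fun p : ℝ × ℝ => ∫ ω, eg ω p.1 * eh ω p.2 ∂P) (μ.prod μ) :=
    hFint.integral_prod_right
  have hφint : Integrable (fun s => ∫ ω, eg ω s ∂P) μ := hF1int.integral_prod_right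
  have hψint : Integrable (fun t => ∫ ω, eh ω t ∂P) μ := hF2int.integral_prod_right
  have hvint : Integrable (fun p : ℝ × ℝ => (∫ ω, eg ω p.1 ∂P) * (∫ ω, eh ω p.2 ∂P)) (μ.prod μ) :=
    hφint.mul_prod hψint
  -- key pointwise bound
  have key : ∀ p : ℝ × ℝ,
      |(∫ ω, eg ω p.1 * eh ω p.2 ∂P) - (∫ ω, eg ω p.1 ∂P) * (∫ ω, eh ω p.2 ∂P)|
        ≤ alphaDep P mA mB := by
    rintro ⟨s, t⟩
    set A : Set Ω := {ω | s < g ω} with hA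
    set B : Set Ω := {ω | t < h ω} with hB
    have hA' : MeasurableSet[mA] A := hg measurableSet_Ioi
    have hB' : MeasurableSet[mB] B := hh measurableSet_Ioi
    have hAm : MeasurableSet A := hmA _ hA'
    have hBm : MeasurableSet B := hmB _ hB'
    have e1 : ∫ ω, eg ω s * eh ω t ∂P = (P (A ∩ B)).toReal := by
      have : (fun ω => eg ω s * eh ω t) = (A ∩ B).indicator (fun _ => (1:ℝ)) := by
        funext ω
        by_cases h1 : s < g ω <;> by_cases h2 : t < h ω <;>
          simp [hegdef, hehdef, Set.indicator_apply, Set.mem_inter_iff, hA, hB, h1, h2]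
      rw [this, integral_indicator_const _ (hAm.inter hBm), smul_eq_mul, mul_one, measureReal_def]
    have e2 : ∫ ω, eg ω s ∂P = (P A).toReal := by
      have : (fun ω => eg ω s) = A.indicator (fun _ => (1:ℝ)) := by
        funext ω; by_cases h1 : s < g ω <;> simp [hegdef, Set.indicator_apply, hA, h1]
      rw [this, integral_indicator_const _ hAm, smul_eq_mul, mul_one, measureReal_def]
    have e3 : ∫ ω, eh ω t ∂P = (P B).toReal := by
      have : (fun ω => eh ω t) = B.indicator (fun _ => (1:ℝ)) := by
        funext ω; by_cases h2 : t < h ω <;> simp [hehdef, Set.indicator_apply, hB, h2]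
      rw [this, integral_indicator_const _ hBm, smul_eq_mul, mul_one, measureReal_def]
    rw [e1, e2, e3]
    exact le_csSup (alphaDep_bddAbove mA mB P) ⟨A, B, hA', hB', rfl⟩
  rw [step1, step2, ← integral_sub huint hvint]
  calc |∫ p : ℝ × ℝ, ((∫ ω, eg ω p.1 * eh ω p.2 ∂P) - (∫ ω, eg ω p.1 ∂P) * (∫ ω, eh ω p.2 ∂P))
          ∂(μ.prod μ)|
      ≤ ∫ p : ℝ × ℝ, |(∫ ω, eg ω p.1 * eh ω p.2 ∂P) - (∫ ω, eg ω p.1 ∂P) * (∫ ω, eh ω p.2 ∂P)|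
          ∂(μ.prod μ) := by
        simpa [Real.norm_eq_abs] using
          norm_integral_le_integral_norm (μ := μ.prod μ)
            (f := fun p : ℝ × ℝ =>
              (∫ ω, eg ω p.1 * eh ω p.2 ∂P) - (∫ ω, eg ω p.1 ∂P) * (∫ ω, eh ω p.2 ∂P))
    _ ≤ ∫ _p : ℝ × ℝ, alphaDep P mA mB ∂(μ.prod μ) :=
        integral_mono_of_nonneg (Filter.Eventually.of_forall fun p => abs_nonneg _)
          (integrable_const _) (Filter.Eventually.of_forall key)
    _ = alphaDep P mA mB := by simp
end Cov


section Main
variable {Ω : Type*}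

lemma measurable_X_past (X : ℕ → Ω → ℝ) {i j : ℕ} (hij : i ≤ j) :
    Measurable[pastSigma X j] (X i) :=
  Measurable.of_comap_le (by
    have : i ∈ Set.Iic j := hij
    exact le_biSup (fun i => MeasurableSpace.comap (X i) inferInstance) this)

lemma measurable_X_future (X : ℕ → Ω → ℝ) {i j : ℕ} (hij : j ≤ i) :
    Measurable[futureSigma X j] (X i) :=
  Measurable.of_comap_le (by
    have : i ∈ Set.Ici j := hij
    exact le_biSup (fun i => MeasurableSpace.comap (X i) inferInstance) this)

lemma pastSigma_le [mΩ : MeasurableSpace Ω] (X : ℕ → Ω → ℝ) (hX : ∀ i, Measurable (X i))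
    (j : ℕ) : pastSigma X j ≤ mΩ :=
  iSup₂_le fun i _ => (hX i).comap_le

lemma futureSigma_le [mΩ : MeasurableSpace Ω] (X : ℕ → Ω → ℝ) (hX : ∀ i, Measurable (X i))
    (j : ℕ) : futureSigma X j ≤ mΩ :=
  iSup₂_le fun i _ => (hX i).comap_le

end Main

/-- The sum of the last l variables of the k-th block of length r:
S^k_{r,l} = X_{kr−l+1} + ⋯ + X_{kr} (in 0-indexed form). -/
def blockTail {Ω : Type*} (X : ℕ → Ω → ℝ) (r l k : ℕ) (ω : Ω) : ℝ :=
  ∑ i ∈ Finset.range l, X (k * r - l + i) ω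

/-- For a strictly stationary sequence with α-mixing coefficients
(α_m), blocks of length r with the last l < r variables dropped, and a bounded
measurable f : ℝ → [0,∞),
|E exp(−Σ_{k=1}^{K} f(a⁻¹(S^k_{r} − S^k_{r,l}))) − (E exp(−f(a⁻¹ S_{r−l})))^K|
  ≤ 4 K α_{l+1}. -/
theorem stmt14
    {Ω : Type*} [MeasurableSpace Ω] (P : Measure Ω) [IsProbabilityMeasure P]
    (X : ℕ → Ω → ℝ) (hXmeas : ∀ i, Measurable (X i))
    (hstat : IsStationarySeq P X)
    (r l K : ℕ) (hr : 1 ≤ r) (hl : 1 ≤ l) (hK : 1 ≤ K) (hlr : l < r)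
    (a : ℝ) (ha : 0 < a)
    (f : ℝ → ℝ) (hfmeas : Measurable f) (hf0 : ∀ x, 0 ≤ f x)
    (M : ℝ) (hfM : ∀ x, f x ≤ M) :
    |(∫ ω, Real.exp (- ∑ k ∈ Finset.Icc 1 K,
        f ((blockS X r k ω - blockTail X r l k ω) / a)) ∂P)
      - (∫ ω, Real.exp (- f (pS X (r - l) ω / a)) ∂P) ^ K|
      ≤ 4 * (K : ℝ) * alphaMix P X (l + 1) := by
  classical
  set N := r - l with hN
  set B : ℕ → Ω → ℝ := fun k ω => ∑ i ∈ Finset.range N, X ((k - 1) * r + i) ω with hBdef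
  -- block identity
  have hblock : ∀ k, 1 ≤ k → ∀ ω, blockS X r k ω - blockTail X r l k ω = B k ω := by
    intro k hk ω
    obtain ⟨k', rfl⟩ : ∃ k', k = k' + 1 := ⟨k - 1, by omega⟩
    have hr2 : r = N + l := by omega
    have hsplit : blockS X r (k' + 1) ω
        = B (k' + 1) ω + ∑ i ∈ Finset.range l, X ((k' + 1) * r - l + i) ω := by
      unfold blockS
      simp only [hBdef, Nat.add_sub_cancel]
      calc ∑ i ∈ Finset.range r, X (k' * r + i) ω
          = ∑ i ∈ Finset.range (N + l), X (k' * r + i) ω := by rw [← hr2]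
        _ = (∑ i ∈ Finset.range N, X (k' * r + i) ω)
            + ∑ i ∈ Finset.range l, X (k' * r + (N + i)) ω := Finset.sum_range_add _ N l
        _ = (∑ i ∈ Finset.range N, X (k' * r + i) ω)
            + ∑ i ∈ Finset.range l, X ((k' + 1) * r - l + i) ω := by
            congr 1
            refine Finset.sum_congr rfl fun i _ => ?_
            congr 1
            have h1 : (k' + 1) * r = k' * r + r := by ring
            omega
    rw [hsplit]
    unfold blockTail
    exact add_sub_cancel_right _ _
  set g : ℕ → Ω → ℝ := fun k ω => Real.exp (-∑ j ∈ Finset.Icc 1 k, f (B j ω / a)) with hgdef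
  set h1 : ℕ → Ω → ℝ := fun k ω => Real.exp (-f (B k ω / a)) with hh1def
  have hBmeas : ∀ k, Measurable (B k) :=
    fun k => Finset.measurable_sum _ fun i _ => hXmeas _
  have hgmeas : ∀ k, Measurable (g k) := fun k =>
    Real.measurable_exp.comp (Measurable.neg
      (Finset.measurable_sum _ fun j _ => hfmeas.comp ((hBmeas j).div_const a)))
  have hh1meas : ∀ k, Measurable (h1 k) := fun k =>
    Real.measurable_exp.comp (Measurable.neg (hfmeas.comp ((hBmeas k).div_const a)))
  have hg0 : ∀ k ω, 0 ≤ g k ω := fun k ω => (Real.exp_pos _).le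
  have hg1 : ∀ k ω, g k ω ≤ 1 := fun k ω => by
    rw [hgdef]
    simp only [Real.exp_le_one_iff, neg_nonpos]
    exact Finset.sum_nonneg fun j _ => hf0 _
  have hh10 : ∀ k ω, 0 ≤ h1 k ω := fun k ω => (Real.exp_pos _).le
  have hh11 : ∀ k ω, h1 k ω ≤ 1 := fun k ω => by
    rw [hh1def]
    simp only [Real.exp_le_one_iff, neg_nonpos]
    exact hf0 _
  -- measurability with respect to past/future sigma algebras
  have hgA : ∀ k, 1 ≤ k → Measurable[pastSigma X (k * r - l - 1)] (g k) := by
    intro k hk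
    refine Real.measurable_exp.comp (Measurable.neg
      (Finset.measurable_sum _ fun j hj => hfmeas.comp (Measurable.div_const ?_ a)))
    refine Finset.measurable_sum _ fun i hi => measurable_X_past X ?_
    rw [Finset.mem_Icc] at hj
    rw [Finset.mem_range] at hi
    obtain ⟨j', rfl⟩ : ∃ j', j = j' + 1 := ⟨j - 1, by omega⟩
    simp only [Nat.add_sub_cancel]
    have h1 : j' * r + r ≤ k * r := by
      have h2 : (j' + 1) * r ≤ k * r := Nat.mul_le_mul_right r (by omega)
      calc j' * r + r = (j' + 1) * r := by ring
        _ ≤ k * r := h2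
    have h3 : i < r - l := by omega
    generalize j' * r = A at h1 ⊢
    generalize k * r = Bv at h1 ⊢
    omega
  have hhF : ∀ k, Measurable[futureSigma X (k * r)] (h1 (k + 1)) := by
    intro k
    refine Real.measurable_exp.comp (Measurable.neg
      (hfmeas.comp (Measurable.div_const ?_ a)))
    refine Finset.measurable_sum _ fun i _ => measurable_X_future X ?_
    simp only [Nat.add_sub_cancel]
    exact Nat.le_add_right _ _
  set c : ℝ := ∫ ω, Real.exp (-f (pS X (r - l) ω / a)) ∂P with hcdef
  have hc0 : 0 ≤ c := integral_nonneg fun ω => (Real.exp_pos _).le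
  have hc1 : c ≤ 1 := by
    rw [hcdef]
    calc ∫ ω, Real.exp (-f (pS X (r - l) ω / a)) ∂P ≤ ∫ _ω, (1 : ℝ) ∂P := by
          refine integral_mono_of_nonneg (Filter.Eventually.of_forall fun ω => (Real.exp_pos _).le)
            (integrable_const 1) (Filter.Eventually.of_forall fun ω => ?_)
          simp only [Real.exp_le_one_iff, neg_nonpos]
          exact hf0 _
      _ = 1 := by simp
  -- stationarity
  have hstat' : ∀ m : ℕ,
      ∫ ω, Real.exp (-f ((∑ i ∈ Finset.range N, X (m + i) ω) / a)) ∂P = c := by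
    intro m
    set Φ : (ℕ → ℝ) → ℝ := fun y => Real.exp (-f ((∑ i ∈ Finset.range N, y i) / a)) with hΦdef
    have hΦ : Measurable Φ :=
      Real.measurable_exp.comp ((hfmeas.comp ((Finset.measurable_sum (Finset.range N)
        fun i _ => measurable_pi_apply i).div_const a)).neg)
    have hT : ∀ m : ℕ, Measurable (fun ω => fun i : ℕ => X (i + m) ω) :=
      fun m => measurable_pi_lambda _ fun i => hXmeas (i + m)
    have hT0 : Measurable (fun ω => fun i : ℕ => X i ω) :=
      measurable_pi_lambda _ fun i => hXmeas i
    have e1 : ∫ ω, Φ (fun i => X (i + m) ω) ∂P = ∫ ω, Φ (fun i => X i ω) ∂P := by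
      rw [← integral_map (hT m).aemeasurable hΦ.aestronglyMeasurable, hstat m,
        integral_map hT0.aemeasurable hΦ.aestronglyMeasurable]
    calc ∫ ω, Real.exp (-f ((∑ i ∈ Finset.range N, X (m + i) ω) / a)) ∂P
        = ∫ ω, Φ (fun i => X (i + m) ω) ∂P := by
          refine integral_congr_ae (Filter.Eventually.of_forall fun ω => ?_)
          simp only [hΦdef]
          have hsum : (∑ i ∈ Finset.range N, X (m + i) ω)
              = ∑ i ∈ Finset.range N, X (i + m) ω :=
            Finset.sum_congr rfl fun i _ => by rw [Nat.add_comm]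
          rw [hsum]
      _ = ∫ ω, Φ (fun i => X i ω) ∂P := e1
      _ = c := by
          rw [hcdef]
          refine integral_congr_ae (Filter.Eventually.of_forall fun ω => ?_)
          simp only [hΦdef]
          rfl
  have hEh : ∀ k : ℕ, ∫ ω, h1 (k + 1) ω ∂P = c := by
    intro k
    rw [← hstat' (k * r)]
    refine integral_congr_ae (Filter.Eventually.of_forall fun ω => ?_)
    simp only [hh1def, hBdef, Nat.add_sub_cancel]
  have hEg1 : ∫ ω, g 1 ω ∂P = c := by
    rw [← hstat' 0]
    refine integral_congr_ae (Filter.Eventually.of_forall fun ω => ?_)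
    simp only [hgdef, hBdef, Finset.Icc_self, Finset.sum_singleton, Nat.sub_self,
      Nat.zero_mul, Nat.zero_add, zero_add]
  -- the mixing coefficient
  set α : ℝ := alphaMix P X (l + 1) with hαdef
  have hbdd : BddAbove (Set.range fun j : ℕ =>
      alphaDep P (pastSigma X j) (futureSigma X (j + (l + 1)))) := by
    refine ⟨1, ?_⟩
    rintro _ ⟨j, rfl⟩
    exact alphaDep_le_one _ _ P
  have hα0 : 0 ≤ α := Real.iSup_nonneg fun j => alphaDep_nonneg _ _ P
  have hstep : ∀ k, 1 ≤ k →
      |(∫ ω, g k ω * h1 (k + 1) ω ∂P) - (∫ ω, g k ω ∂P) * c| ≤ α := by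
    intro k hk
    set j := k * r - l - 1 with hjdef
    have hjl : j + (l + 1) = k * r := by
      have hrk : r ≤ k * r := by
        calc r = 1 * r := (one_mul r).symm
          _ ≤ k * r := Nat.mul_le_mul_right r hk
      omega
    have hfut : Measurable[futureSigma X (j + (l + 1))] (h1 (k + 1)) := by
      rw [hjl]; exact hhF k
    have hcov := cov_abs_le (pastSigma X j) (futureSigma X (j + (l + 1))) P
      (pastSigma_le X hXmeas j) (futureSigma_le X hXmeas (j + (l + 1)))
      (g k) (h1 (k + 1)) (hgA k hk) hfut (hg0 k) (hg1 k) (hh10 (k + 1)) (hh11 (k + 1))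
    have hle : alphaDep P (pastSigma X j) (futureSigma X (j + (l + 1))) ≤ α := by
      rw [hαdef]
      exact le_ciSup hbdd j
    rw [hEh k] at hcov
    exact hcov.trans hle
  have hssplit : ∀ k, 1 ≤ k → ∀ ω, g (k + 1) ω = g k ω * h1 (k + 1) ω := by
    intro k hk ω
    simp only [hgdef, hh1def]
    rw [Finset.sum_Icc_succ_top (by omega : 1 ≤ k + 1), neg_add, Real.exp_add]
  have main : ∀ k, 1 ≤ k → |(∫ ω, g k ω ∂P) - c ^ k| ≤ 4 * (k : ℝ) * α := by
    intro k hk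
    induction k, hk using Nat.le_induction with
    | base =>
      rw [hEg1, pow_one, sub_self, abs_zero]
      positivity
    | succ k hk ih =>
      have e1 : ∫ ω, g (k + 1) ω ∂P = ∫ ω, g k ω * h1 (k + 1) ω ∂P :=
        integral_congr_ae (Filter.Eventually.of_forall fun ω => hssplit k hk ω)
      have h2 : |(∫ ω, g k ω ∂P) * c - c ^ k * c| ≤ 4 * (k : ℝ) * α := by
        rw [← sub_mul, abs_mul]
        calc |(∫ ω, g k ω ∂P) - c ^ k| * |c| ≤ (4 * (k : ℝ) * α) * 1 := by
              apply mul_le_mul ih _ (abs_nonneg _) (by positivity)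
              rw [abs_of_nonneg hc0]; exact hc1
          _ = 4 * (k : ℝ) * α := mul_one _
      calc |(∫ ω, g (k + 1) ω ∂P) - c ^ (k + 1)|
          = |((∫ ω, g k ω * h1 (k + 1) ω ∂P) - (∫ ω, g k ω ∂P) * c)
              + ((∫ ω, g k ω ∂P) * c - c ^ k * c)| := by
            rw [e1, pow_succ]; ring_nf
        _ ≤ |(∫ ω, g k ω * h1 (k + 1) ω ∂P) - (∫ ω, g k ω ∂P) * c|
              + |(∫ ω, g k ω ∂P) * c - c ^ k * c| := abs_add_le _ _
        _ ≤ α + 4 * (k : ℝ) * α := add_le_add (hstep k hk) h2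
        _ ≤ 4 * ((k : ℝ) + 1) * α := by nlinarith
        _ = 4 * ((k + 1 : ℕ) : ℝ) * α := by push_cast; ring
  have hfinal : ∫ ω, Real.exp (-∑ k ∈ Finset.Icc 1 K,
      f ((blockS X r k ω - blockTail X r l k ω) / a)) ∂P = ∫ ω, g K ω ∂P := by
    refine integral_congr_ae (Filter.Eventually.of_forall fun ω => ?_)
    simp only [hgdef]
    congr 1
    congr 1
    refine Finset.sum_congr rfl fun k hk => ?_
    rw [Finset.mem_Icc] at hk
    rw [hblock k hk.1 ω]
  rw [hfinal]
  exact main K hK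
end
end
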